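/- arXiv:1002.2734 — 6 statements merged into one kernel-verified Lean document; each statement's English description precedes it below -/
import Mathlib

section
/- Let α ∈ ℝ be an irrational number with bounded partial quotients, and define N : ℝ × ℝ → ℤ by N(x, x') = ⌊x'⌋ − ⌊x⌋. Then there exist positive constants C₁, C₂ such that for every pair x, x' ∈ ℝ with 0 < |x − x'| < 1/2, the sequence (N(x + nα, x' + nα))_{n≥0} is (C₁/|x − x'|, C₂/|x − x'|)-sparse. (Lemma 7.1.) -/
noncomputable section

/-- `‖t‖`: the distance from a real number `t` to the nearest integer. -/
def nint (t : ℝ) : ℝ := |t - round t|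

/-- A sequence `(x n)` of integers is `a`-sparse (Definition 5): there is a strictly
increasing sequence `(k m)` with `k 0 = 0` such that for `n ≥ 1`, `x n ≠ 0` iff
`n = k m` for some `m ≥ 1`, and `k (m+1) − k m ≥ a` for all `m ≥ 1`. -/
def IsSparse (a : ℝ) (x : ℕ → ℤ) : Prop :=
  ∃ k : ℕ → ℕ, StrictMono k ∧ k 0 = 0 ∧
    (∀ n : ℕ, 1 ≤ n → (x n ≠ 0 ↔ ∃ m : ℕ, 1 ≤ m ∧ n = k m)) ∧
    (∀ m : ℕ, 1 ≤ m → a ≤ (k (m + 1) : ℝ) - (k m : ℝ))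

/-- A sequence is `(a,b)`-sparse if it is `a`-sparse and moreover
`k (m+1) − k m ≤ b` for all `m ≥ 0`. -/
def IsSparseBtw (a b : ℝ) (x : ℕ → ℤ) : Prop :=
  ∃ k : ℕ → ℕ, StrictMono k ∧ k 0 = 0 ∧
    (∀ n : ℕ, 1 ≤ n → (x n ≠ 0 ↔ ∃ m : ℕ, 1 ≤ m ∧ n = k m)) ∧
    (∀ m : ℕ, 1 ≤ m → a ≤ (k (m + 1) : ℝ) - (k m : ℝ)) ∧
    (∀ m : ℕ, (k (m + 1) : ℝ) - (k m : ℝ) ≤ b)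

/- ### Auxiliary lemmas -/

lemma nint_le_abs (t : ℝ) (m : ℤ) : nint t ≤ |t - m| := round_le t m

lemma nint_small (α : ℝ) {ε : ℝ} (hε : 0 < ε) :
    ∃ n : ℕ, 0 < n ∧ nint ((n : ℝ) * α) < ε := by
  obtain ⟨Q, hQ⟩ := exists_nat_gt (1 / ε)
  have hQ0 : 0 < Q := by
    rcases Nat.eq_zero_or_pos Q with h | h
    · exfalso
      subst h
      have h2 : (0 : ℝ) < 1 / ε := by positivity
      norm_num at hQ
      linarith
    · exact h
  obtain ⟨k, hk0, hk1, hk2⟩ := Real.exists_nat_abs_mul_sub_round_le α hQ0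
  refine ⟨k, hk0, lt_of_le_of_lt hk2 ?_⟩
  rw [div_lt_iff₀ (by positivity)]
  rw [div_lt_iff₀ hε] at hQ
  nlinarith

lemma nint_dirichlet (α : ℝ) {m : ℕ} (hm : 1 < m) :
    ∃ k : ℕ, 0 < k ∧ k < m ∧ nint ((k : ℝ) * α) ≤ 1 / (m : ℝ) := by
  obtain ⟨k, hk0, hk1, hk2⟩ := Real.exists_nat_abs_mul_sub_round_le α (n := m - 1) (by omega)
  refine ⟨k, hk0, by omega, ?_⟩
  have : ((m - 1 : ℕ) : ℝ) + 1 = (m : ℝ) := by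
    push_cast [Nat.cast_sub (by omega : 1 ≤ m)]
    ring
  rwa [this] at hk2

/-- Least positive `q` achieving `nint (q α) < ε`. -/
lemma nint_min (α : ℝ) {ε : ℝ} (hε : 0 < ε) :
    ∃ q : ℕ, 0 < q ∧ nint ((q : ℝ) * α) < ε ∧
      ∀ m : ℕ, 0 < m → m < q → ε ≤ nint ((m : ℝ) * α) := by
  classical
  have hPx : ∃ n : ℕ, 0 < n ∧ nint ((n : ℝ) * α) < ε := nint_small α hε
  refine ⟨Nat.find hPx, (Nat.find_spec hPx).1, (Nat.find_spec hPx).2, ?_⟩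
  intro m hm hmlt
  have := Nat.find_min hPx hmlt
  push_neg at this
  exact this hm

/-- Increasing sweep: a fractional-part walk with positive steps in `[β₂, δ/4]`
eventually enters `[1-δ, 1)`. -/
lemma sweep_pos {δ β₂ : ℝ} (hβ₂ : 0 < β₂) (hδ : 0 < δ)
    (φ e : ℕ → ℝ) (hrec : ∀ j, φ (j + 1) = Int.fract (φ j + e j))
    (hφ0 : 0 ≤ φ 0)
    (he : ∀ j, β₂ ≤ e j ∧ e j ≤ δ / 4) :
    ∃ j, 1 - δ ≤ φ j := by
  by_contra hcon
  push_neg at hcon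
  have key : ∀ j : ℕ, φ 0 + j * β₂ ≤ φ j := by
    intro j
    induction j with
    | zero => simp
    | succ j ih =>
      have h1 : φ j + e j < 1 := by
        have h2 := hcon j
        have h3 := (he j).2
        linarith
      have h0 : 0 ≤ φ j + e j := by
        have h4 := (he j).1
        have h5 : (0:ℝ) ≤ (j : ℝ) * β₂ := by positivity
        linarith
      rw [hrec j, Int.fract_eq_self.mpr ⟨h0, h1⟩]
      have h4 := (he j).1
      push_cast
      linarith
  obtain ⟨j, hj⟩ := exists_nat_gt ((1 - φ 0) / β₂)
  have h1 := key j
  have h2 := hcon j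
  rw [div_lt_iff₀ hβ₂] at hj
  linarith

/-- Decreasing sweep. -/
lemma sweep_neg {δ β₂ : ℝ} (hβ₂ : 0 < β₂) (hδ : 0 < δ) (hδ1 : δ < 1)
    (φ e : ℕ → ℝ) (hrec : ∀ j, φ (j + 1) = Int.fract (φ j + e j))
    (hφ0 : ∀ j, 0 ≤ φ j)
    (he : ∀ j, -(δ / 4) ≤ e j ∧ e j ≤ -β₂) :
    ∃ j, 1 - δ ≤ φ j := by
  by_contra hcon
  push_neg at hcon
  have key : ∀ j : ℕ, φ j ≤ φ 0 - j * β₂ := by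
    intro j
    induction j with
    | zero => simp
    | succ j ih =>
      have h0 : 0 ≤ φ j + e j := by
        by_contra h
        push_neg at h
        have hfl : ⌊φ j + e j⌋ = -1 := by
          apply Int.floor_eq_iff.mpr
          constructor
          · push_cast
            have := (he j).1
            have := hφ0 j
            linarith
          · push_cast
            linarith
        have hfr : Int.fract (φ j + e j) = φ j + e j + 1 := by
          rw [Int.fract, hfl]
          push_cast
          ring
        have h2 := hcon (j + 1)
        rw [hrec j, hfr] at h2
        have h3 := (he j).1
        have h4 := hφ0 j
        linarith
      have h1 : φ j + e j < 1 := by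
        have h2 := hcon j
        have h3 := (he j).2
        linarith
      rw [hrec j, Int.fract_eq_self.mpr ⟨h0, h1⟩]
      have h3 := (he j).2
      push_cast
      linarith
  obtain ⟨j, hj⟩ := exists_nat_gt (φ 0 / β₂)
  have h1 := key j
  have h2 := hφ0 j
  rw [div_lt_iff₀ hβ₂] at hj
  linarith

lemma hit_iff (a δ : ℝ) (h0 : 0 < δ) (h1 : δ < 1) :
    (⌊a + δ⌋ - ⌊a⌋ ≠ 0) ↔ 1 - δ ≤ Int.fract a := by
  have key : ⌊a + δ⌋ = ⌊a⌋ + ⌊Int.fract a + δ⌋ := by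
    conv_lhs => rw [show a + δ = (⌊a⌋ : ℝ) + (Int.fract a + δ) by rw [Int.fract]; ring]
    rw [Int.floor_intCast_add]
  rw [key]
  have hf0 := Int.fract_nonneg a
  have hf1 := Int.fract_lt_one a
  constructor
  · intro h
    by_contra hc
    push_neg at hc
    have : ⌊Int.fract a + δ⌋ = 0 := by
      apply Int.floor_eq_zero_iff.mpr
      constructor <;> [linarith; linarith]
    omega
  · intro h
    have : ⌊Int.fract a + δ⌋ = 1 := by
      apply Int.floor_eq_iff.mpr
      constructor
      · push_cast; linarith
      · push_cast; linarith
    omega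

lemma IsSparseBtw.congr_ne {a b : ℝ} {x y : ℕ → ℤ} (h : ∀ n, x n = 0 ↔ y n = 0)
    (hx : IsSparseBtw a b x) : IsSparseBtw a b y := by
  obtain ⟨k, h1, h2, h3, h4, h5⟩ := hx
  exact ⟨k, h1, h2, fun n hn => by rw [ne_eq, ← h n, ← ne_eq]; exact h3 n hn, h4, h5⟩

set_option maxHeartbeats 2000000 in
lemma main_lemma (α C : ℝ) (hC : 0 < C)
    (hb : ∀ n : ℤ, n ≠ 0 → 1 / (C * |(n : ℝ)|) ≤ nint ((n : ℝ) * α))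
    (x δ : ℝ) (hδ0 : 0 < δ) (hδ1 : δ < 1 / 2) :
    IsSparseBtw ((1 / C) / δ) ((4 + 4 * C) / δ)
      (fun n : ℕ => ⌊x + δ + (n : ℝ) * α⌋ - ⌊x + (n : ℝ) * α⌋) := by
  classical
  -- bpq for naturals
  have hbn : ∀ n : ℕ, 0 < n → 1 / (C * (n : ℝ)) ≤ nint ((n : ℝ) * α) := by
    intro n hn
    have h := hb (n : ℤ) (by exact_mod_cast hn.ne')
    have h2 : |((n : ℤ) : ℝ)| = (n : ℝ) := by
      rw [abs_of_nonneg (by positivity)]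
      push_cast
      ring
    rw [h2] at h
    convert h using 3 <;> push_cast <;> ring
  have hnintpos : ∀ n : ℕ, 0 < n → 0 < nint ((n : ℝ) * α) := by
    intro n hn
    refine lt_of_lt_of_le ?_ (hbn n hn)
    have : (0:ℝ) < (n:ℝ) := by exact_mod_cast hn
    positivity
  -- hit characterization
  have hitX : ∀ n : ℕ, ((⌊x + δ + (n : ℝ) * α⌋ - ⌊x + (n : ℝ) * α⌋) ≠ 0) ↔
      1 - δ ≤ Int.fract (x + (n : ℝ) * α) := by
    intro n
    rw [show x + δ + (n : ℝ) * α = (x + (n : ℝ) * α) + δ by ring]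
    exact hit_iff _ δ hδ0 (by linarith)
  -- q1 : least with nint (q1 α) < δ/4 ; q2 : least with nint (q2 α) < nint (q1 α)
  obtain ⟨q1, hq1pos, hq1lt, hq1min⟩ := nint_min α (show (0:ℝ) < δ / 4 by linarith)
  have hβ1pos : 0 < nint ((q1 : ℝ) * α) := hnintpos q1 hq1pos
  obtain ⟨q2, hq2pos, hq2lt, hq2min⟩ := nint_min α hβ1pos
  have hβ2pos : 0 < nint ((q2 : ℝ) * α) := hnintpos q2 hq2pos
  have hq12 : q1 < q2 := by
    by_contra hle
    push_neg at hle
    rcases eq_or_lt_of_le hle with h | h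
    · rw [h] at hq2lt
      exact absurd hq2lt (lt_irrefl _)
    · have := hq1min q2 hq2pos h
      linarith
  have hq1R : (0:ℝ) < (q1:ℝ) := by exact_mod_cast hq1pos
  have hq2R : (0:ℝ) < (q2:ℝ) := by exact_mod_cast hq2pos
  -- bound q1 ≤ 4/δ
  have hq1b : (q1 : ℝ) ≤ 4 / δ := by
    by_contra h
    push_neg at h
    have h8 : (8 : ℝ) < 4 / δ := by
      rw [lt_div_iff₀ hδ0]
      linarith
    have hq1gt : 1 < q1 := by
      by_contra h2
      push_neg at h2
      have h9 : (q1 : ℝ) ≤ 1 := by exact_mod_cast h2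
      linarith
    obtain ⟨k, hk0, hk1, hk2⟩ := nint_dirichlet α hq1gt
    have h3 := hq1min k hk0 hk1
    have h4 : (1 : ℝ) / q1 < δ / 4 := by
      rw [div_lt_div_iff₀ hq1R (by norm_num)]
      rw [div_lt_iff₀ hδ0] at h
      nlinarith
    linarith
  -- bound q2 ≤ 1 / nint (q1 α)
  have hq2b : (q2 : ℝ) ≤ 1 / nint ((q1 : ℝ) * α) := by
    by_contra h
    push_neg at h
    have hq2gt : 1 < q2 := by
      by_contra h2
      push_neg at h2
      have h9 : (q2 : ℝ) ≤ 1 := by exact_mod_cast h2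
      have h10 : (1:ℝ) ≤ 1 / nint ((q1 : ℝ) * α) := by
        rw [le_div_iff₀ hβ1pos]
        linarith [hq1lt, hδ1]
      linarith
    obtain ⟨k, hk0, hk1, hk2⟩ := nint_dirichlet α hq2gt
    have h3 := hq2min k hk0 hk1
    have h4 : (1 : ℝ) / q2 < nint ((q1 : ℝ) * α) := by
      rw [div_lt_iff₀ hq2R]
      rw [div_lt_iff₀ hβ1pos] at h
      linarith
    linarith
  have hβ1b : 1 / (C * (q1 : ℝ)) ≤ nint ((q1 : ℝ) * α) := hbn q1 hq1pos
  have hq2c : (q2 : ℝ) ≤ C * q1 := by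
    refine hq2b.trans ?_
    rw [div_le_iff₀ hβ1pos]
    have h1 : 1 / (C * (q1:ℝ)) * (C * q1) = 1 := by
      field_simp
    nlinarith [mul_le_mul_of_nonneg_right hβ1b (le_of_lt (by positivity : (0:ℝ) < C * q1))]
  have hW : (q1 : ℝ) + q2 ≤ (4 + 4 * C) / δ := by
    have h1 : (q2 : ℝ) ≤ C * (4 / δ) := hq2c.trans (by nlinarith)
    have h2 : (4 + 4 * C) / δ = 4 / δ + C * (4 / δ) := by ring
    linarith
  -- signs
  have habs1 : |(q1 : ℝ) * α - round ((q1 : ℝ) * α)| = nint ((q1 : ℝ) * α) := rfl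
  have habs2 : |(q2 : ℝ) * α - round ((q2 : ℝ) * α)| = nint ((q2 : ℝ) * α) := rfl
  have hs1ne : (q1 : ℝ) * α - round ((q1 : ℝ) * α) ≠ 0 := by
    intro h
    rw [h] at habs1
    simp at habs1
    linarith
  have hs2ne : (q2 : ℝ) * α - round ((q2 : ℝ) * α) ≠ 0 := by
    intro h
    rw [h] at habs2
    simp at habs2
    linarith
  -- same sign contradiction
  have hsame : ¬ ((0 < (q1 : ℝ) * α - round ((q1 : ℝ) * α) ∧
        0 < (q2 : ℝ) * α - round ((q2 : ℝ) * α)) ∨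
      ((q1 : ℝ) * α - round ((q1 : ℝ) * α) < 0 ∧
        (q2 : ℝ) * α - round ((q2 : ℝ) * α) < 0)) := by
    intro hss
    have hdiff : |((q2 : ℝ) * α - round ((q2 : ℝ) * α))
        - ((q1 : ℝ) * α - round ((q1 : ℝ) * α))| < nint ((q1 : ℝ) * α) := by
      rcases hss with ⟨h1, h2⟩ | ⟨h1, h2⟩
      · rw [abs_of_pos h1] at habs1
        rw [abs_of_pos h2] at habs2
        rw [abs_lt]
        constructor <;> linarith
      · rw [abs_of_neg h1] at habs1
        rw [abs_of_neg h2] at habs2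
        rw [abs_lt]
        constructor <;> linarith
    have hcast : ((q2 - q1 : ℕ) : ℝ) * α - ((round ((q2:ℝ) * α) - round ((q1:ℝ) * α) : ℤ) : ℝ)
        = ((q2 : ℝ) * α - round ((q2 : ℝ) * α)) - ((q1 : ℝ) * α - round ((q1 : ℝ) * α)) := by
      push_cast [Nat.cast_sub hq12.le]
      ring
    have h5 := nint_le_abs (((q2 - q1 : ℕ) : ℝ) * α) (round ((q2:ℝ) * α) - round ((q1:ℝ) * α))
    rw [hcast] at h5
    have h6 := hq2min (q2 - q1) (by omega) (by omega)
    linarith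
  -- window lemma
  have window : ∀ n₀ : ℕ, ∃ n : ℕ, n₀ < n ∧ n ≤ n₀ + (q1 + q2) ∧
      1 - δ ≤ Int.fract (x + (n : ℝ) * α) := by
    intro n₀
    set u : ℕ → ℕ := fun j => Nat.rec 0 (fun _ p => if p < q2 then p + q1 else p - q2) j with hu
    have hu0 : u 0 = 0 := rfl
    have hus : ∀ j, u (j + 1) = if u j < q2 then u j + q1 else u j - q2 := fun j => rfl
    have hub : ∀ j, u j < q1 + q2 := by
      intro j
      induction j with
      | zero => rw [hu0]; omega
      | succ j ih => rw [hus]; split <;> omega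
    set φ : ℕ → ℝ := fun j => Int.fract (x + ((n₀ + 1 + u j : ℕ) : ℝ) * α) with hφ
    set e : ℕ → ℝ := fun j => if u j < q2 then (q1 : ℝ) * α - round ((q1 : ℝ) * α)
      else -((q2 : ℝ) * α - round ((q2 : ℝ) * α)) with he
    have fract_key : ∀ a s : ℝ, Int.fract (Int.fract a + s) = Int.fract (a + s) := by
      intro a s
      rw [show Int.fract a + s = (a + s) - ((⌊a⌋ : ℤ) : ℝ) by rw [Int.fract]; push_cast; ring]
      rw [Int.fract_sub_intCast]
    have hφrec : ∀ j, φ (j + 1) = Int.fract (φ j + e j) := by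
      intro j
      by_cases hc : u j < q2
      · have h1 : u (j + 1) = u j + q1 := by rw [hus]; simp [hc]
        simp only [hφ, he, if_pos hc]
        rw [fract_key]
        have h2 : (x + ((n₀ + 1 + u j : ℕ) : ℝ) * α) + ((q1 : ℝ) * α - round ((q1 : ℝ) * α))
            = (x + ((n₀ + 1 + u (j + 1) : ℕ) : ℝ) * α) - ((round ((q1:ℝ) * α) : ℤ) : ℝ) := by
          rw [h1]
          push_cast
          ring
        rw [h2, Int.fract_sub_intCast]
      · have hge : q2 ≤ u j := not_lt.mp hc
        have h1 : u (j + 1) = u j - q2 := by rw [hus]; simp [hc]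
        simp only [hφ, he, if_neg hc]
        rw [fract_key]
        have h2 : (x + ((n₀ + 1 + u j : ℕ) : ℝ) * α) + -((q2 : ℝ) * α - round ((q2 : ℝ) * α))
            = (x + ((n₀ + 1 + u (j + 1) : ℕ) : ℝ) * α) + ((round ((q2:ℝ) * α) : ℤ) : ℝ) := by
          rw [h1]
          push_cast [Nat.cast_sub hge]
          ring
        rw [h2, Int.fract_add_intCast]
    have hfinal : ∃ j, 1 - δ ≤ φ j := by
      rcases lt_or_gt_of_ne hs1ne with hs1neg | hs1pos
      · -- s1 < 0, so s2 > 0, steps are negative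
        have hs2pos : 0 < (q2 : ℝ) * α - round ((q2 : ℝ) * α) := by
          rcases lt_or_gt_of_ne hs2ne with h | h
          · exact absurd (Or.inr ⟨hs1neg, h⟩) hsame
          · exact h
        apply sweep_neg hβ2pos hδ0 (by linarith) φ e hφrec (fun j => Int.fract_nonneg _)
        intro j
        rw [abs_of_neg hs1neg] at habs1
        rw [abs_of_pos hs2pos] at habs2
        simp only [he]
        split
        · constructor <;> linarith [hq1lt, hq2lt]
        · constructor <;> linarith [hq1lt, hq2lt]
      · have hs2neg : (q2 : ℝ) * α - round ((q2 : ℝ) * α) < 0 := by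
          rcases lt_or_gt_of_ne hs2ne with h | h
          · exact h
          · exact absurd (Or.inl ⟨hs1pos, h⟩) hsame
        apply sweep_pos hβ2pos hδ0 φ e hφrec (Int.fract_nonneg _)
        intro j
        rw [abs_of_pos hs1pos] at habs1
        rw [abs_of_neg hs2neg] at habs2
        simp only [he]
        split
        · constructor <;> linarith [hq1lt, hq2lt]
        · constructor <;> linarith [hq1lt, hq2lt]
    obtain ⟨j, hj⟩ := hfinal
    refine ⟨n₀ + 1 + u j, by omega, ?_, hj⟩
    have := hub j
    omega
  -- gap lemma
  have gap : ∀ n n' : ℕ, n < n' → 1 - δ ≤ Int.fract (x + (n : ℝ) * α) →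
      1 - δ ≤ Int.fract (x + (n' : ℝ) * α) → (1 / C) / δ ≤ (n' : ℝ) - n := by
    intro n n' hlt h1 h2
    have hf1 : Int.fract (x + (n : ℝ) * α) < 1 := Int.fract_lt_one _
    have hf2 : Int.fract (x + (n' : ℝ) * α) < 1 := Int.fract_lt_one _
    have e1 : ((n' - n : ℕ) : ℝ) * α
        - ((⌊x + (n' : ℝ) * α⌋ - ⌊x + (n : ℝ) * α⌋ : ℤ) : ℝ)
        = Int.fract (x + (n' : ℝ) * α) - Int.fract (x + (n : ℝ) * α) := by
      push_cast [Nat.cast_sub hlt.le]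
      rw [Int.fract, Int.fract]
      push_cast
      ring
    have e2 := nint_le_abs (((n' - n : ℕ) : ℝ) * α) (⌊x + (n' : ℝ) * α⌋ - ⌊x + (n : ℝ) * α⌋)
    rw [e1] at e2
    have e3 : |Int.fract (x + (n' : ℝ) * α) - Int.fract (x + (n : ℝ) * α)| < δ := by
      rw [abs_lt]
      constructor <;> linarith
    have e4 := hbn (n' - n) (by omega)
    have hd : (0 : ℝ) < ((n' - n : ℕ) : ℝ) := by
      have h5 : 0 < n' - n := by omega
      exact_mod_cast h5
    have e5 : 1 / (C * ((n' - n : ℕ) : ℝ)) < δ := by linarith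
    have e6 : (1 / C) / δ ≤ ((n' - n : ℕ) : ℝ) := by
      rw [div_le_iff₀ hδ0]
      rw [div_lt_iff₀ (by positivity)] at e5
      rw [div_le_iff₀ hC]
      nlinarith
    have e7 : ((n' - n : ℕ) : ℝ) = (n' : ℝ) - n := by
      push_cast [Nat.cast_sub hlt.le]
      ring
    linarith [e6, e7.symm.le]
  -- construct k
  have hex : ∀ p : ℕ, ∃ n : ℕ, p < n ∧ 1 - δ ≤ Int.fract (x + (n : ℝ) * α) := by
    intro p
    obtain ⟨n, h1, _, h3⟩ := window p
    exact ⟨n, h1, h3⟩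
  set k : ℕ → ℕ := fun m => Nat.rec 0 (fun _ p => Nat.find (hex p)) m with hk
  have hk0 : k 0 = 0 := rfl
  have hks : ∀ m, k (m + 1) = Nat.find (hex (k m)) := fun m => rfl
  have hkspec : ∀ m, k m < k (m + 1) ∧ 1 - δ ≤ Int.fract (x + ((k (m + 1) : ℕ) : ℝ) * α) := by
    intro m
    rw [hks]
    exact Nat.find_spec (hex (k m))
  have hkmin : ∀ m n, k m < n → 1 - δ ≤ Int.fract (x + (n : ℝ) * α) → k (m + 1) ≤ n := by
    intro m n h1 h2
    rw [hks]
    exact Nat.find_min' (hex (k m)) ⟨h1, h2⟩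
  have hmono : StrictMono k := strictMono_nat_of_lt_succ fun m => (hkspec m).1
  refine ⟨k, hmono, hk0, ?_, ?_, ?_⟩
  · -- characterization
    intro n hn
    rw [ne_eq, ← ne_eq, hitX n]
    constructor
    · intro hhit
      have hex2 : ∃ m, n ≤ k m := ⟨n, hmono.le_apply⟩
      have hspec2 := Nat.find_spec hex2
      have hm'pos : Nat.find hex2 ≠ 0 := by
        intro h
        rw [h, hk0] at hspec2
        omega
      obtain ⟨mm, hmm⟩ := Nat.exists_eq_succ_of_ne_zero hm'pos
      have hlt2 : k mm < n := by
        have := Nat.find_min hex2 (by omega : mm < Nat.find hex2)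
        omega
      have hle2 : k (mm + 1) ≤ n := hkmin mm n hlt2 hhit
      have hge2 : n ≤ k (mm + 1) := by
        rw [show mm + 1 = Nat.find hex2 from by omega]
        exact hspec2
      exact ⟨mm + 1, by omega, by omega⟩
    · rintro ⟨m, hm1, rfl⟩
      obtain ⟨mm, rfl⟩ := Nat.exists_eq_succ_of_ne_zero (by omega : m ≠ 0)
      exact (hkspec mm).2
  · -- lower gap
    intro m hm
    obtain ⟨mm, rfl⟩ := Nat.exists_eq_succ_of_ne_zero (by omega : m ≠ 0)
    have h1 := (hkspec mm).2
    have h2 := (hkspec (mm + 1)).2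
    have h3 := (hkspec (mm + 1)).1
    exact gap (k (mm + 1)) (k (mm + 1 + 1)) h3 h1 h2
  · -- upper gap
    intro m
    obtain ⟨n, h1, h2, h3⟩ := window (k m)
    have h4 : k (m + 1) ≤ n := hkmin m n h1 h3
    have h5 : (k (m + 1) : ℝ) ≤ (k m : ℝ) + ((q1 : ℝ) + q2) := by
      have h6 : (k (m+1) : ℝ) ≤ (n : ℝ) := by exact_mod_cast h4
      have h7 : (n : ℝ) ≤ ((k m + (q1 + q2) : ℕ) : ℝ) := by exact_mod_cast h2
      push_cast at h7
      linarith
    linarith [hW]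

/-- **Lemma 7.1.** Let `α` be irrational with bounded partial quotients (equivalently,
`‖nα‖ ≥ 1/(C|n|)` for all `n ≠ 0` and some `C > 0`), and `N(x,x') = ⌊x'⌋ − ⌊x⌋`.  Then
there are `C₁, C₂ > 0` such that for all `x, x'` with `0 < |x − x'| < 1/2`, the sequence
`(N(x + nα, x' + nα))_{n ≥ 0}` is `(C₁/|x − x'|, C₂/|x − x'|)`-sparse. -/
theorem stmt4 (α : ℝ) (hirr : Irrational α)
    (hbpq : ∃ C : ℝ, 0 < C ∧ ∀ n : ℤ, n ≠ 0 → 1 / (C * |(n : ℝ)|) ≤ nint ((n : ℝ) * α)) :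
    ∃ C₁ C₂ : ℝ, 0 < C₁ ∧ 0 < C₂ ∧
      ∀ x x' : ℝ, 0 < |x - x'| → |x - x'| < 1 / 2 →
        IsSparseBtw (C₁ / |x - x'|) (C₂ / |x - x'|)
          (fun n : ℕ => ⌊x' + (n : ℝ) * α⌋ - ⌊x + (n : ℝ) * α⌋) := by
  obtain ⟨C, hC, hb⟩ := hbpq
  refine ⟨1 / C, 4 + 4 * C, by positivity, by positivity, ?_⟩
  intro x x' h0 h1
  have hxx : x ≠ x' := by
    intro h
    rw [h] at h0
    simp at h0
  rcases lt_or_gt_of_ne hxx with hlt | hgt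
  · have e1 : |x - x'| = x' - x := by
      rw [abs_sub_comm]
      exact abs_of_pos (by linarith)
    have h2 := main_lemma α C hC hb x (x' - x) (by linarith) (by rw [← e1]; exact h1)
    rw [show x + (x' - x) = x' from by ring] at h2
    rw [e1]
    exact h2
  · have e1 : |x - x'| = x - x' := abs_of_pos (by linarith)
    have h2 := main_lemma α C hC hb x' (x - x') (by linarith) (by rw [← e1]; exact h1)
    rw [show x' + (x - x') = x from by ring] at h2
    rw [e1]
    exact h2.congr_ne (fun n => by omega)
end
end

section
/- Let (γ(n))_{n≥0} be an increasing sequence of real numbers with γ(0) ≥ 1 and γ(n) → ∞. Let α, β ∈ (0,1) be irrational numbers with continued-fraction denominator sequences (q_n) and (r_n) respectively, and suppose that 4·γ(n−1)·γ(n)·q_n ≤ r_n and 4·γ(n)²·r_n ≤ q_{n+1} for all n ≥ 1. Then 1, α, β are linearly independent over ℚ, i.e. there are no integers k, l, m with (k,l) ≠ (0,0) and kα + lβ = m; equivalently, the rotation T(x,y) = (x+α, y+β) of 𝕋² is ergodic. (Ergodicity claim proved in Section 9.) -/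
noncomputable section

/-- `(q n)` is the sequence of denominators of the continued fraction expansion of the
irrational `ξ ∈ (0,1)`: `q 0 = 1`, `q 1 = a 1`, `q (n+1) = a (n+1) q n + q (n-1)` for the
partial quotients `a n ≥ 1`, together with the standard properties
`1/(2 qₙ qₙ₊₁) < |ξ − pₙ/qₙ| < 1/(qₙ qₙ₊₁)`, `‖qₙ ξ‖ ≤ 1/qₙ₊₁` and the best-approximation
property `‖m ξ‖ ≥ ‖q_{n-1} ξ‖ ≥ 1/(2 qₙ)` for `0 < |m| < qₙ`. -/
def IsCFDenomSeq (ξ : ℝ) (q : ℕ → ℕ) : Prop :=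
  q 0 = 1 ∧
  (∃ a : ℕ → ℕ, (∀ n, 1 ≤ n → 1 ≤ a n) ∧ q 1 = a 1 ∧
    ∀ n, 1 ≤ n → q (n + 1) = a (n + 1) * q n + q (n - 1)) ∧
  (∀ n : ℕ, ∃ p : ℤ,
    1 / (2 * (q n : ℝ) * (q (n + 1) : ℝ)) < |ξ - (p : ℝ) / (q n : ℝ)| ∧
    |ξ - (p : ℝ) / (q n : ℝ)| < 1 / ((q n : ℝ) * (q (n + 1) : ℝ))) ∧
  (∀ n : ℕ, nint ((q n : ℝ) * ξ) ≤ 1 / (q (n + 1) : ℝ)) ∧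
  (∀ n : ℕ, 1 ≤ n → ∀ m : ℤ, m ≠ 0 → |m| < (q n : ℤ) →
    nint ((q (n - 1) : ℝ) * ξ) ≤ nint ((m : ℝ) * ξ) ∧
    1 / (2 * (q n : ℝ)) ≤ nint ((q (n - 1) : ℝ) * ξ))

/-- `nint t` is at most the distance from `t` to any integer. -/
lemma nint_le_abs_sub_int (t : ℝ) (z : ℤ) : nint t ≤ |t - (z : ℝ)| := by
  rcases eq_or_ne (round t) z with h | h
  · simp [nint, h]
  · have h1 : |t - (round t : ℤ)| ≤ 1 / 2 := by
      simpa using abs_sub_round t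
    have h3 : (1 : ℝ) ≤ |((z - round t : ℤ) : ℝ)| := by
      exact_mod_cast Int.one_le_abs (sub_ne_zero.mpr (Ne.symm h))
    have h4 : |((z - round t : ℤ) : ℝ)| ≤ |(z : ℝ) - t| + |t - (round t : ℝ)| := by
      push_cast
      exact abs_sub_le _ t _
    have h5 : |(z : ℝ) - t| = |t - (z : ℝ)| := abs_sub_comm _ _
    simp only [nint]
    push_cast at h1 h3 h4 ⊢
    linarith
/-- If `x - y` is an integer then `nint x = nint y`. -/
lemma nint_eq_of_sub_eq_int (x y : ℝ) (z : ℤ) (h : x - y = (z : ℝ)) : nint x = nint y := by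
  apply le_antisymm
  · calc nint x ≤ |x - ((z + round y : ℤ) : ℝ)| := nint_le_abs_sub_int _ _
      _ = |y - (round y : ℝ)| := by push_cast; congr 1; linarith
      _ = nint y := rfl
  · calc nint y ≤ |y - ((round x - z : ℤ) : ℝ)| := nint_le_abs_sub_int _ _
      _ = |x - (round x : ℝ)| := by push_cast; congr 1; linarith
      _ = nint x := rfl

/-- `nint (j t) ≤ |j| nint t` for integer `j`. -/
lemma nint_int_mul_le (j : ℤ) (t : ℝ) : nint ((j : ℝ) * t) ≤ |(j : ℝ)| * nint t := by
  calc nint ((j : ℝ) * t) ≤ |(j : ℝ) * t - ((j * round t : ℤ) : ℝ)| := nint_le_abs_sub_int _ _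
    _ = |(j : ℝ)| * |t - (round t : ℝ)| := by
        push_cast
        rw [← abs_mul]
        ring_nf
    _ = |(j : ℝ)| * nint t := rfl

/-- The denominators of a continued fraction expansion are positive. -/
lemma cf_denom_pos {ξ : ℝ} {q : ℕ → ℕ} (h : IsCFDenomSeq ξ q) : ∀ n, 1 ≤ q n := by
  obtain ⟨h0, ⟨a, ha, h1, hrec⟩, -⟩ := h
  have key : ∀ n, 1 ≤ n → 1 ≤ q n := by
    intro n hn
    induction n, hn using Nat.le_induction with
    | base => rw [h1]; exact ha 1 le_rfl
    | succ n hn ih =>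
      rw [hrec n hn]
      calc 1 = 1 * 1 := rfl
        _ ≤ a (n + 1) * q n := Nat.mul_le_mul (ha (n + 1) (by omega)) ih
        _ ≤ a (n + 1) * q n + q (n - 1) := Nat.le_add_right _ _
  intro n
  cases n with
  | zero => rw [h0]
  | succ n => exact key (n + 1) (by omega)

/-- **Ergodicity claim of Section 9.** If `γ(n) ↑ ∞` with `γ(0) ≥ 1` and the continued
fraction denominators of the irrationals `α, β ∈ (0,1)` satisfy
`4 γ(n−1) γ(n) qₙ ≤ rₙ` and `4 γ(n)² rₙ ≤ q_{n+1}` for all `n ≥ 1`, then `1, α, β` are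
linearly independent over `ℚ`, i.e. the rotation `T(x,y) = (x+α, y+β)` is ergodic. -/
theorem stmt5 (γ : ℕ → ℝ) (hγ0 : 1 ≤ γ 0) (hγmono : Monotone γ)
    (hγtop : Filter.Tendsto γ Filter.atTop Filter.atTop)
    (α β : ℝ) (hα : Irrational α) (hβ : Irrational β)
    (hα01 : α ∈ Set.Ioo (0:ℝ) 1) (hβ01 : β ∈ Set.Ioo (0:ℝ) 1)
    (q r : ℕ → ℕ) (hq : IsCFDenomSeq α q) (hr : IsCFDenomSeq β r)
    (h42 : ∀ n : ℕ, 1 ≤ n →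
      4 * γ (n - 1) * γ n * (q n : ℝ) ≤ (r n : ℝ) ∧
      4 * (γ n) ^ 2 * (r n : ℝ) ≤ (q (n + 1) : ℝ)) :
    ∀ k l m : ℤ, (k, l) ≠ (0, 0) → (k : ℝ) * α + (l : ℝ) * β ≠ (m : ℝ) := by
  intro k l m hkl heq
  by_cases hk : k = 0
  · subst hk
    have hl : l ≠ 0 := fun h => hkl (by simp [h])
    have : ((l : ℝ)) * β = (m : ℝ) := by simpa using heq
    exact (hβ.intCast_mul hl).ne_int m (by rw [this])
  by_cases hl : l = 0
  · subst hl
    have : ((k : ℝ)) * α = (m : ℝ) := by simpa using heq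
    exact (hα.intCast_mul hk).ne_int m (by rw [this])
  -- both k and l nonzero
  have hqpos := cf_denom_pos hq
  have hrpos := cf_denom_pos hr
  obtain ⟨hq0, hqa, hqconv, hqapprox, hqbest⟩ := hq
  obtain ⟨hr0, hra, hrconv, hrapprox, hrbest⟩ := hr
  have hγ1 : ∀ j, (1 : ℝ) ≤ γ j := fun j => le_trans hγ0 (hγmono (Nat.zero_le j))
  -- choose n large
  obtain ⟨N, hN⟩ := (hγtop.eventually_ge_atTop ((|k| : ℤ) + (|l| : ℤ) + 1 : ℝ)).exists_forall_of_atTop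
  set n : ℕ := max N 1 with hn
  have hn1 : 1 ≤ n := le_max_right _ _
  have hγn : ((|k| : ℤ) : ℝ) + ((|l| : ℤ) : ℝ) + 1 ≤ γ n := by
    have := hN n (le_max_left _ _); push_cast at this ⊢; linarith
  have hkabs : (1 : ℝ) ≤ ((|k| : ℤ) : ℝ) := by exact_mod_cast Int.one_le_abs hk
  have hlabs : (1 : ℝ) ≤ ((|l| : ℤ) : ℝ) := by exact_mod_cast Int.one_le_abs hl
  have hrn : (1 : ℝ) ≤ (r n : ℝ) := by exact_mod_cast hrpos n
  have hrn1 : (1 : ℝ) ≤ (r (n + 1) : ℝ) := by exact_mod_cast hrpos (n + 1)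
  have hqn1 : (1 : ℝ) ≤ (q (n + 1) : ℝ) := by exact_mod_cast hqpos (n + 1)
  have h42n := (h42 n hn1).2
  have h42n1 := (h42 (n + 1) (by omega)).1
  simp only [Nat.add_sub_cancel] at h42n1
  -- |k * r n| < q (n+1)
  have hkr : |k * (r n : ℤ)| < (q (n + 1) : ℤ) := by
    have h1 : ((|k| : ℤ) : ℝ) * (r n : ℝ) < (q (n + 1) : ℝ) := by
      have hγk : ((|k| : ℤ) : ℝ) + 1 ≤ γ n := by linarith
      have h4 : ((|k| : ℤ) : ℝ) + 1 ≤ 4 * γ n ^ 2 := by nlinarith [hγ1 n]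
      have h5 := mul_le_mul_of_nonneg_right h4 (by linarith : (0:ℝ) ≤ (r n : ℝ))
      linarith
    have : ((|k * (r n : ℤ)| : ℤ) : ℝ) < ((q (n + 1) : ℤ) : ℝ) := by
      rw [abs_mul, abs_of_nonneg (by positivity : (0:ℤ) ≤ (r n : ℤ))]
      push_cast at h1 ⊢
      exact h1
    exact_mod_cast this
  have hkr0 : k * (r n : ℤ) ≠ 0 := by
    have : r n ≠ 0 := Nat.one_le_iff_ne_zero.mp (hrpos n)
    exact mul_ne_zero hk (by exact_mod_cast this)
  obtain ⟨hle, hlow⟩ := hqbest (n + 1) (by omega) (k * (r n : ℤ)) hkr0 hkr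
  simp only [Nat.add_sub_cancel] at hle hlow
  -- nint (k rₙ α) = nint (-l (rₙ β))
  have hkey : nint (((k * (r n : ℤ) : ℤ) : ℝ) * α) = nint (((-l : ℤ) : ℝ) * ((r n : ℝ) * β)) := by
    apply nint_eq_of_sub_eq_int _ _ (m * (r n : ℤ))
    push_cast
    linear_combination (r n : ℝ) * heq
  have hup : nint (((-l : ℤ) : ℝ) * ((r n : ℝ) * β)) ≤ ((|l| : ℤ) : ℝ) * nint ((r n : ℝ) * β) := by
    have h1 := nint_int_mul_le (-l) ((r n : ℝ) * β)
    have habs : |((-l : ℤ) : ℝ)| = ((|l| : ℤ) : ℝ) := by push_cast; exact abs_neg _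
    rwa [habs] at h1
  have hrapx := hrapprox n
  -- combine
  have hchain : 1 / (2 * (q (n + 1) : ℝ)) ≤ ((|l| : ℤ) : ℝ) / (r (n + 1) : ℝ) := by
    have h1 : 1 / (2 * (q (n + 1) : ℝ)) ≤ nint (((k * (r n : ℤ) : ℤ) : ℝ) * α) :=
      le_trans hlow hle
    have h2 : ((|l| : ℤ) : ℝ) * nint ((r n : ℝ) * β) ≤ ((|l| : ℤ) : ℝ) / (r (n + 1) : ℝ) := by
      rw [div_eq_mul_one_div]
      exact mul_le_mul_of_nonneg_left hrapx (by positivity)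
    calc 1 / (2 * (q (n + 1) : ℝ)) ≤ nint (((k * (r n : ℤ) : ℤ) : ℝ) * α) := h1
      _ = nint (((-l : ℤ) : ℝ) * ((r n : ℝ) * β)) := hkey
      _ ≤ ((|l| : ℤ) : ℝ) * nint ((r n : ℝ) * β) := hup
      _ ≤ ((|l| : ℤ) : ℝ) / (r (n + 1) : ℝ) := h2
  rw [div_le_div_iff₀ (by positivity) (by positivity)] at hchain
  -- r (n+1) ≥ 4 γ n γ (n+1) q (n+1) > 2 |l| q (n+1) : contradiction
  have hq1pos : (0:ℝ) < (q (n + 1) : ℝ) := by linarith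
  have hA : ((|l| : ℤ) : ℝ) + 1 ≤ γ n := by linarith
  have h1 : (((|l| : ℤ) : ℝ) + 1) * (q (n + 1) : ℝ) ≤ γ n * (q (n + 1) : ℝ) :=
    mul_le_mul_of_nonneg_right hA hq1pos.le
  have h2 : γ n * (q (n + 1) : ℝ) ≤ γ n * γ (n + 1) * (q (n + 1) : ℝ) := by
    nlinarith [hγ1 n, hγ1 (n + 1)]
  have h3 : (0:ℝ) ≤ ((|l| : ℤ) : ℝ) * (q (n + 1) : ℝ) := by positivity
  linarith
end
end

section
/- Let T be an ergodic automorphism of a standard probability Borel space (X, 𝓑, μ) which is rigid along an increasing sequence (q_n) of natural numbers, i.e. μ(T^{q_n}A ∩ A) → μ(A) for every A ∈ 𝓑. Let f : X → ℝ be a strictly positive integrable function, and suppose there exists C > 0 such that |∫_X e^{2πi s f^{(n)}(x)} dμ(x)| ≤ C/|s| for every real s ≠ 0 and all n large enough. Then for every real s ≠ 0 the equation ψ(Tx)/ψ(x) = e^{2πi s f(x)} has no measurable solution ψ : X → S¹ (and therefore the special flow T^f is weakly mixing). (Proposition 2.1.) -/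
open MeasureTheory
open Complex Filter

lemma normExpSubOne (t : ℝ) : ‖Complex.exp (t * I) - 1‖ ≤ |t| := by
  have h1 : Complex.exp (t * I) - 1 = ↑(Real.cos t - 1) + ↑(Real.sin t) * I := by
    rw [Complex.exp_mul_I]; push_cast [Complex.ofReal_cos, Complex.ofReal_sin]; ring
  rw [h1, Complex.norm_add_mul_I]
  have h2 : (Real.cos t - 1)^2 + (Real.sin t)^2 = 4 * ((1 - Real.cos t)/2) := by
    have := Real.sin_sq_add_cos_sq t; nlinarith
  rw [h2, show (4:ℝ) * ((1 - Real.cos t)/2) = 2^2 * ((1 - Real.cos t)/2) by ring,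
    Real.sqrt_mul (by positivity), Real.sqrt_sq (by norm_num), ← Real.abs_sin_half]
  calc 2 * |Real.sin (t/2)| ≤ 2 * |t/2| := by
        have := Real.abs_sin_le_abs (x := t/2); linarith
    _ = |t| := by rw [abs_div]; simp; ring

lemma normExpSubExp (a b : ℝ) : ‖Complex.exp (a * I) - Complex.exp (b * I)‖ ≤ |a - b| := by
  have h : Complex.exp (a * I) - Complex.exp (b * I)
      = Complex.exp (b * I) * (Complex.exp ((a - b : ℝ) * I) - 1) := by
    rw [mul_sub, ← Complex.exp_add, mul_one]; push_cast; ring_nf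
  rw [h, norm_mul, Complex.norm_exp_ofReal_mul_I, one_mul]
  exact normExpSubOne _

noncomputable def Jfun {X : Type*} (g : X → ℂ) (x : X) : ℤ :=
  ⌈(Complex.arg (g x) + Real.pi) * 128 / (2 * Real.pi)⌉

noncomputable def hfun {X : Type*} (g : X → ℂ) (x : X) : ℂ :=
  Complex.exp ((-Real.pi + (Jfun g x) * (2 * Real.pi / 128) : ℝ) * I)

def Gset {X : Type*} (g : X → ℂ) (S : X → X) : Set X :=
  ⋃ j ∈ Finset.Icc (1:ℤ) 128, (Jfun g ⁻¹' {j} ∩ S ⁻¹' (Jfun g ⁻¹' {j}))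

lemma Jfun_mem {X : Type*} (g : X → ℂ) (x : X) : Jfun g x ∈ Finset.Icc (1:ℤ) 128 := by
  have h1 : -Real.pi < Complex.arg (g x) := Complex.neg_pi_lt_arg _
  have h2 : Complex.arg (g x) ≤ Real.pi := Complex.arg_le_pi _
  have hpi : (0:ℝ) < Real.pi := Real.pi_pos
  have hu0 : 0 < (Complex.arg (g x) + Real.pi) * 128 / (2 * Real.pi) :=
    div_pos (by nlinarith) (by positivity)
  have hu1 : (Complex.arg (g x) + Real.pi) * 128 / (2 * Real.pi) ≤ 128 := by
    rw [div_le_iff₀ (by positivity)]; nlinarith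
  simp only [Finset.mem_Icc, Jfun]
  exact ⟨Int.ceil_pos.mpr hu0, by exact_mod_cast Int.ceil_le.mpr (by exact_mod_cast hu1)⟩

lemma Jfun_measurable {X : Type*} [MeasurableSpace X] {g : X → ℂ} (hg : Measurable g) :
    Measurable (Jfun g) :=
  Measurable.ceil (((Complex.measurable_arg.comp hg).add_const _).mul_const _ |>.div_const _)

lemma hfun_norm {X : Type*} (g : X → ℂ) (x : X) : ‖hfun g x‖ = 1 :=
  Complex.norm_exp_ofReal_mul_I _

lemma hfun_close {X : Type*} (g : X → ℂ) (hg1 : ∀ x, ‖g x‖ = 1) (x : X) :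
    ‖g x - hfun g x‖ ≤ 2 * Real.pi / 128 := by
  have hpi : (0:ℝ) < Real.pi := Real.pi_pos
  set t := Complex.arg (g x) with ht
  have hgx : g x = Complex.exp (t * I) := by
    have := Complex.norm_mul_exp_arg_mul_I (g x)
    rw [hg1 x] at this; simpa using this.symm
  set u := (t + Real.pi) * 128 / (2 * Real.pi) with hud
  have hu : u * (2 * Real.pi / 128) = t + Real.pi := by
    rw [hud]; field_simp
  have h1 : u ≤ (⌈u⌉ : ℝ) := Int.le_ceil u
  have h2 : (⌈u⌉ : ℝ) < u + 1 := Int.ceil_lt_add_one u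
  have hJ : Jfun g x = ⌈u⌉ := rfl
  rw [hgx, hfun, hJ]
  calc ‖Complex.exp (t * I) - Complex.exp ((-Real.pi + (⌈u⌉:ℝ) * (2 * Real.pi / 128) : ℝ) * I)‖
      ≤ |t - (-Real.pi + (⌈u⌉:ℝ) * (2 * Real.pi / 128))| := normExpSubExp _ _
    _ ≤ 2 * Real.pi / 128 := by
        have hte : t = -Real.pi + u * (2 * Real.pi / 128) := by rw [hu]; ring
        rw [hte, abs_le]
        constructor <;> nlinarith

lemma Gset_measurable {X : Type*} [MeasurableSpace X] {g : X → ℂ} (hg : Measurable g)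
    {S : X → X} (hS : Measurable S) : MeasurableSet (Gset g S) := by
  apply Finset.measurableSet_biUnion
  intro j _
  exact ((Jfun_measurable hg) (measurableSet_singleton j)).inter
    (hS ((Jfun_measurable hg) (measurableSet_singleton j)))

lemma integrable_of_bounded {X : Type*} [MeasurableSpace X] {μ : Measure X}
    [IsFiniteMeasure μ] {E : Type*} [NormedAddCommGroup E] {u : X → E}
    (hm : AEStronglyMeasurable u μ)
    {c : ℝ} (hc : ∀ x, ‖u x‖ ≤ c) : Integrable u μ :=
  Integrable.mono' (integrable_const c) hm (Filter.Eventually.of_forall hc)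

lemma approx_int {X : Type*} [MeasurableSpace X] (μ : Measure X) [IsProbabilityMeasure μ]
    (g : X → ℂ) (hgm : Measurable g) (hg1 : ∀ x, ‖g x‖ = 1)
    (S : X → X) (hSm : Measurable S) :
    ‖(∫ x, g (S x) * (starRingEnd ℂ) (g x) ∂μ) - 1‖ ≤
      4 * Real.pi / 128 + 2 * (μ (Gset g S)ᶜ).toReal := by
  have hpi := Real.pi_pos
  have hgn : ∀ x, ‖g x‖ = 1 := fun x => hg1 x
  have hA : Integrable (fun x => g (S x) * (starRingEnd ℂ) (g x)) μ :=
    integrable_of_bounded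
      (((hgm.comp hSm).mul (Complex.continuous_conj.measurable.comp hgm)).aestronglyMeasurable)
      (c := 1) (fun x => by rw [norm_mul, hgn, RCLike.norm_conj, hgn, one_mul])
  have hB : Integrable (fun x => g x * (starRingEnd ℂ) (g x)) μ :=
    integrable_of_bounded
      ((hgm.mul (Complex.continuous_conj.measurable.comp hgm)).aestronglyMeasurable)
      (c := 1) (fun x => by rw [norm_mul, hgn, RCLike.norm_conj, hgn, one_mul])
  have I1 : (∫ x, g x * (starRingEnd ℂ) (g x) ∂μ) = 1 := by
    have : (fun x => g x * (starRingEnd ℂ) (g x)) = fun _ => (1:ℂ) := by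
      funext x
      rw [Complex.mul_conj, Complex.normSq_eq_norm_sq, hg1]; norm_num
    rw [this]; simp
  rw [← I1, ← integral_sub hA hB]
  calc ‖∫ x, (g (S x) * (starRingEnd ℂ) (g x) - g x * (starRingEnd ℂ) (g x)) ∂μ‖
      ≤ ∫ x, ‖g (S x) * (starRingEnd ℂ) (g x) - g x * (starRingEnd ℂ) (g x)‖ ∂μ :=
        norm_integral_le_integral_norm _
    _ = ∫ x, ‖g (S x) - g x‖ ∂μ := by
        congr 1; funext x
        rw [← sub_mul, norm_mul, RCLike.norm_conj, hgn, mul_one]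
    _ ≤ ∫ x, (4 * Real.pi / 128 + Set.indicator (Gset g S)ᶜ (fun _ => (2:ℝ)) x) ∂μ := by
        apply integral_mono
        · exact integrable_of_bounded (((hgm.comp hSm).sub hgm).norm.aestronglyMeasurable)
            (c := 2) (fun x => by
              rw [norm_norm]
              calc ‖g (S x) - g x‖ ≤ ‖g (S x)‖ + ‖g x‖ := norm_sub_le _ _
                _ = 2 := by rw [hgn, hgn]; norm_num)
        · exact (integrable_const _).add ((integrable_const (2:ℝ)).indicator
            (Gset_measurable hgm hSm).compl)
        · intro x
          dsimp only
          by_cases hx : x ∈ Gset g S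
          · have hJ : Jfun g (S x) = Jfun g x := by
              simp only [Gset, Set.mem_iUnion, Set.mem_inter_iff, Set.mem_preimage,
                Set.mem_singleton_iff] at hx
              obtain ⟨j, _, h1, h2⟩ := hx
              rw [h1, h2]
            have hh : hfun g (S x) = hfun g x := by unfold hfun; rw [hJ]
            have := hfun_close g hg1 (S x)
            have h2 := hfun_close g hg1 x
            rw [Set.indicator_of_notMem (by simpa using hx)]
            calc ‖g (S x) - g x‖ ≤ ‖g (S x) - hfun g (S x)‖ + ‖hfun g (S x) - g x‖ :=
                  norm_sub_le_norm_sub_add_norm_sub _ _ _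
              _ ≤ 2 * Real.pi / 128 + 2 * Real.pi / 128 :=
                  add_le_add this (by rw [hh, norm_sub_rev]; exact h2)
              _ ≤ 4 * Real.pi / 128 + 0 := by linarith
          · rw [Set.indicator_of_mem (by simpa using hx)]
            calc ‖g (S x) - g x‖ ≤ ‖g (S x)‖ + ‖g x‖ := norm_sub_le _ _
              _ = 2 := by rw [hgn, hgn]; norm_num
              _ ≤ 4 * Real.pi / 128 + 2 := by linarith [Real.pi_pos]
    _ = 4 * Real.pi / 128 + 2 * (μ (Gset g S)ᶜ).toReal := by
        rw [integral_add (integrable_const _) ((integrable_const (2:ℝ)).indicator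
            (Gset_measurable hgm hSm).compl), integral_const,
          integral_indicator_const _ (Gset_measurable hgm hSm).compl]
        simp [mul_comm]
        rfl

lemma Gset_compl_tendsto {X : Type*} [MeasurableSpace X] (μ : Measure X)
    [IsProbabilityMeasure μ] {g : X → ℂ} (hgm : Measurable g) {T : X → X} (hTm : Measurable T)
    {q : ℕ → ℕ}
    (hrig : ∀ A : Set X, MeasurableSet A →
      Tendsto (fun n => μ (T^[q n] ⁻¹' A ∩ A)) atTop (nhds (μ A))) :
    Tendsto (fun n => (μ (Gset g (T^[q n]))ᶜ).toReal) atTop (nhds 0) := by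
  set A : ℤ → Set X := fun j => Jfun g ⁻¹' {j} with hA
  have hAm : ∀ j, MeasurableSet (A j) :=
    fun j => (Jfun_measurable hgm) (measurableSet_singleton j)
  have hdisj : ∀ (S : X → X), (↑(Finset.Icc (1:ℤ) 128) : Set ℤ).PairwiseDisjoint
      (fun j => A j ∩ S ⁻¹' (A j)) := by
    intro S i _ j _ hij
    refine Set.disjoint_left.mpr fun x hx1 hx2 => hij ?_
    have h1 : Jfun g x = i := hx1.1
    have h2 : Jfun g x = j := hx2.1
    rw [← h1, h2]
  have hmeasG : ∀ n, μ (Gset g (T^[q n])) =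
      ∑ j ∈ Finset.Icc (1:ℤ) 128, μ (A j ∩ T^[q n] ⁻¹' (A j)) := by
    intro n
    exact measure_biUnion_finset (hdisj _)
      (fun j _ => (hAm j).inter ((hTm.iterate (q n)) (hAm j)))
  have hsum1 : ∑ j ∈ Finset.Icc (1:ℤ) 128, μ (A j) = 1 := by
    rw [← measure_biUnion_finset (by
        intro i _ j _ hij
        refine Set.disjoint_left.mpr fun x hx1 hx2 => hij ?_
        have h1 : Jfun g x = i := hx1
        have h2 : Jfun g x = j := hx2
        rw [← h1, h2]) (fun j _ => hAm j)]
    have : ⋃ j ∈ Finset.Icc (1:ℤ) 128, A j = Set.univ := by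
      ext x
      simp only [Set.mem_iUnion, Set.mem_univ, iff_true]
      exact ⟨Jfun g x, Jfun_mem g x, rfl⟩
    rw [this, measure_univ]
  have htend : Tendsto (fun n => μ (Gset g (T^[q n]))) atTop (nhds 1) := by
    simp only [hmeasG]
    rw [← hsum1]
    exact tendsto_finset_sum _ (fun j _ => by
      simpa [Set.inter_comm] using hrig (A j) (hAm j))
  have htendR : Tendsto (fun n => (μ (Gset g (T^[q n]))).toReal) atTop (nhds 1) := by
    have := (ENNReal.tendsto_toReal (ENNReal.one_ne_top)).comp htend
    exact this
  have hc : ∀ n, (μ (Gset g (T^[q n]))ᶜ).toReal = 1 - (μ (Gset g (T^[q n]))).toReal := by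
    intro n
    rw [measure_compl (Gset_measurable hgm (hTm.iterate (q n))) (measure_ne_top μ _),
      measure_univ, ENNReal.toReal_sub_of_le prob_le_one ENNReal.one_ne_top]
    simp
  simp only [hc]
  have := htendR.const_sub 1
  simpa using this

lemma cocycle_iterate {X : Type*} [MeasurableSpace X] {μ : Measure X} {T : X → X}
    (hT : MeasurePreserving T μ μ) {ψ E : X → ℂ}
    (heq : ∀ᵐ x ∂μ, ψ (T x) = E x * ψ x) (n : ℕ) :
    ∀ᵐ x ∂μ, ψ (T^[n] x) = (∏ j ∈ Finset.range n, E (T^[j] x)) * ψ x := by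
  induction n with
  | zero => simp
  | succ n ih =>
    have hpull : ∀ᵐ x ∂μ, ψ (T (T^[n] x)) = E (T^[n] x) * ψ (T^[n] x) :=
      (hT.iterate n).quasiMeasurePreserving.ae heq
    filter_upwards [ih, hpull] with x h1 h2
    rw [Function.iterate_succ_apply', h2, h1, Finset.prod_range_succ]
    ring


/-- **Proposition 2.1.** Let `T` be an ergodic automorphism of a standard probability
Borel space which is rigid along `(q_n)`, and let `f > 0` be integrable.  If there is
`C > 0` such that `|∫ e^{2πi s f⁽ⁿ⁾} dμ| ≤ C/|s|` for every `s ≠ 0` and all `n` large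
enough, then for every `s ≠ 0` the eigenvalue equation `ψ(Tx)/ψ(x) = e^{2πi s f(x)}` has
no measurable circle-valued solution (hence the special flow `T^f` is weakly mixing). -/
theorem stmt6 {X : Type*} [MeasurableSpace X] [StandardBorelSpace X]
    (μ : Measure X) [IsProbabilityMeasure μ]
    (T : X ≃ᵐ X) (hT : Ergodic T μ)
    (q : ℕ → ℕ) (hq : StrictMono q)
    (hrig : ∀ A : Set X, MeasurableSet A →
      Filter.Tendsto (fun n => μ ((⇑T)^[q n] ⁻¹' A ∩ A)) Filter.atTop (nhds (μ A)))
    (f : X → ℝ) (hfm : Measurable f) (hfi : Integrable f μ) (hfpos : ∀ x, 0 < f x)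
    (hdecay : ∃ C : ℝ, 0 < C ∧ ∀ s : ℝ, s ≠ 0 → ∃ n₀ : ℕ, ∀ n, n₀ ≤ n →
      ‖∫ x, Complex.exp (2 * Real.pi * Complex.I * s *
          (∑ k ∈ Finset.range n, f ((⇑T)^[k] x))) ∂μ‖ ≤ C / |s|) :
    ∀ s : ℝ, s ≠ 0 → ¬ ∃ ψ : X → ℂ, Measurable ψ ∧ (∀ x, ‖ψ x‖ = 1) ∧
      ∀ᵐ x ∂μ, ψ (T x) = Complex.exp (2 * Real.pi * Complex.I * s * f x) * ψ x := by
  intro s hs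
  rintro ⟨ψ, hψm, hψ1, hψeq⟩
  obtain ⟨C, hC, hbound⟩ := hdecay
  have hs' : (0:ℝ) < |s| := abs_pos.mpr hs
  set k : ℕ := max 1 ⌈2 * C / |s|⌉₊ with hkdef
  have hk1 : (1:ℝ) ≤ (k:ℝ) := by
    exact_mod_cast Nat.one_le_cast.mpr (le_max_left _ _)
  have hkge : 2 * C / |s| ≤ (k:ℝ) :=
    le_trans (Nat.le_ceil _) (by exact_mod_cast Nat.cast_le.mpr (le_max_right _ _))
  have hks : ((k:ℝ) * s) ≠ 0 := mul_ne_zero (by linarith) hs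
  have hhalf : C / |(k:ℝ) * s| ≤ 1/2 := by
    have habs : |(k:ℝ) * s| = (k:ℝ) * |s| := by
      rw [abs_mul, Nat.abs_cast]
    have h2C : 2 * C ≤ (k:ℝ) * |s| := (div_le_iff₀ hs').mp hkge
    rw [habs]
    calc C / ((k:ℝ) * |s|) ≤ C / (2 * C) := div_le_div_of_nonneg_left hC.le (by linarith) h2C
      _ = 1/2 := by field_simp
  -- the k-th power of ψ
  set g : X → ℂ := fun x => ψ x ^ k with hgdef
  have hgm : Measurable g := hψm.pow_const k
  have hg1 : ∀ x, ‖g x‖ = 1 := fun x => by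
    rw [hgdef]; simp [norm_pow, hψ1]
  -- cocycle identity
  have hcoc := cocycle_iterate hT.toMeasurePreserving hψeq
  have key : ∀ n : ℕ, ∀ᵐ x ∂μ,
      Complex.exp (2 * (Real.pi:ℂ) * Complex.I * ((k:ℂ) * (s:ℂ)) *
        (∑ j ∈ Finset.range n, ((f ((⇑T)^[j] x) : ℝ) : ℂ)))
      = g ((⇑T)^[n] x) * (starRingEnd ℂ) (g x) := by
    intro n
    filter_upwards [hcoc n] with x hx
    have h1 : ψ x * (starRingEnd ℂ) (ψ x) = 1 := by
      rw [Complex.mul_conj, Complex.normSq_eq_norm_sq, hψ1]; norm_num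
    have h2 : g ((⇑T)^[n] x) * (starRingEnd ℂ) (g x)
        = ((∏ j ∈ Finset.range n,
            Complex.exp (2 * (Real.pi:ℂ) * Complex.I * (s:ℂ) * ((f ((⇑T)^[j] x) : ℝ) : ℂ))))^k := by
      have hψc : ψ x ^ k * (starRingEnd ℂ) (ψ x) ^ k = 1 := by rw [← mul_pow, h1, one_pow]
      simp only [hgdef, map_pow]
      rw [hx, mul_pow, mul_assoc, hψc, mul_one]
    rw [h2, ← Complex.exp_sum, ← Complex.exp_nat_mul]
    congr 1
    rw [Finset.mul_sum, Finset.mul_sum]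
    apply Finset.sum_congr rfl
    intro j _
    ring
  have keyInt : ∀ n : ℕ,
      (∫ x, Complex.exp (2 * (Real.pi:ℂ) * Complex.I * ((k:ℂ) * (s:ℂ)) *
        (∑ j ∈ Finset.range n, ((f ((⇑T)^[j] x) : ℝ) : ℂ))) ∂μ)
      = ∫ x, g ((⇑T)^[n] x) * (starRingEnd ℂ) (g x) ∂μ :=
    fun n => integral_congr_ae (key n)
  -- decay bound for the k·s frequency
  obtain ⟨n₀, hb⟩ := hbound ((k:ℝ) * s) hks
  push_cast at hb
  -- rigidity: measure of bad sets tends to 0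
  have hGt := Gset_compl_tendsto μ hgm T.measurable hrig
  have hev : ∀ᶠ n in atTop, (μ (Gset g ((⇑T)^[q n]))ᶜ).toReal < 1/16 :=
    hGt.eventually_lt_const (by norm_num)
  obtain ⟨N, hN⟩ := eventually_atTop.mp hev
  set n := max N n₀ with hndef
  have hqn : n₀ ≤ q n := le_trans (le_max_right _ _) (hq.le_apply)
  -- combine
  have hb' := hb (q n) hqn
  rw [keyInt (q n)] at hb'
  have h1 : ‖∫ x, g ((⇑T)^[q n] x) * (starRingEnd ℂ) (g x) ∂μ‖ ≤ 1/2 :=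
    hb'.trans hhalf
  have h2 : ‖(∫ x, g ((⇑T)^[q n] x) * (starRingEnd ℂ) (g x) ∂μ) - 1‖ ≤
      4 * Real.pi / 128 + 2 * (μ (Gset g ((⇑T)^[q n]))ᶜ).toReal :=
    approx_int μ g hgm hg1 _ (T.measurable.iterate (q n))
  have h3 : (μ (Gset g ((⇑T)^[q n]))ᶜ).toReal < 1/16 := hN n (le_max_left _ _)
  have hpi : Real.pi < 3.15 := Real.pi_lt_d2
  have htri : (1:ℝ) ≤ ‖∫ x, g ((⇑T)^[q n] x) * (starRingEnd ℂ) (g x) ∂μ‖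
      + ‖(∫ x, g ((⇑T)^[q n] x) * (starRingEnd ℂ) (g x) ∂μ) - 1‖ := by
    have := norm_sub_le (∫ x, g ((⇑T)^[q n] x) * (starRingEnd ℂ) (g x) ∂μ)
      ((∫ x, g ((⇑T)^[q n] x) * (starRingEnd ℂ) (g x) ∂μ) - 1)
    simpa using this
  linarith
end

section
/- Let h : 𝕋 → ℝ be a piecewise absolutely continuous map with N discontinuities. Suppose that h' : 𝕋 → ℝ is of bounded variation and |h'(x)| ≥ θ > 0 for all x ∈ 𝕋 (off the discontinuity set). Then |∫_𝕋 e^{2πi h(x)} dx| ≤ N/(πθ) + Var h'/(2πθ²). (Lemma 3.1.) -/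
open MeasureTheory
open Set
open scoped ENNReal

lemma norm_exp_2piI (t : ℝ) : ‖Complex.exp (2 * Real.pi * Complex.I * t)‖ = 1 := by
  have : (2 * Real.pi * Complex.I * t : ℂ) = ((2 * Real.pi * t : ℝ) : ℂ) * Complex.I := by
    push_cast; ring
  rw [this]
  exact Complex.norm_exp_ofReal_mul_I _

lemma abel_id (n : ℕ) (c : ℕ → ℝ) (g : ℕ → ℂ) :
    ∑ i ∈ Finset.range n, c i • (g (i+1) - g i)
      = c n • g n - c 0 • g 0 - ∑ i ∈ Finset.range n, (c (i+1) - c i) • g (i+1) := by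
  have h := Finset.sum_range_sub (fun i => c i • g i) n
  have : ∀ i, c i • (g (i+1) - g i)
      = (c (i+1) • g (i+1) - c i • g i) - (c (i+1) - c i) • g (i+1) := by
    intro i; rw [smul_sub, sub_smul]; abel
  calc ∑ i ∈ Finset.range n, c i • (g (i+1) - g i)
      = ∑ i ∈ Finset.range n,
          ((c (i+1) • g (i+1) - c i • g i) - (c (i+1) - c i) • g (i+1)) :=
        Finset.sum_congr rfl (fun i _ => this i)
    _ = (∑ i ∈ Finset.range n, (c (i+1) • g (i+1) - c i • g i))
          - ∑ i ∈ Finset.range n, (c (i+1) - c i) • g (i+1) := Finset.sum_sub_distrib _ _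
    _ = c n • g n - c 0 • g 0 - ∑ i ∈ Finset.range n, (c (i+1) - c i) • g (i+1) := by
        rw [h]

lemma evar_sum {f : ℝ → ℝ} {x : ℕ → ℝ} (hx : Monotone x) (n : ℕ) :
    ∑ i ∈ Finset.range n, eVariationOn f (Icc (x i) (x (i+1)))
      ≤ eVariationOn f (Icc (x 0) (x n)) := by
  induction n with
  | zero => simp
  | succ n ih =>
    rw [Finset.sum_range_succ]
    have h := eVariationOn.Icc_add_Icc f (s := univ) (hx (Nat.zero_le n))
      (hx (Nat.le_succ n)) (mem_univ _)
    simp only [univ_inter] at h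
    calc _ ≤ eVariationOn f (Icc (x 0) (x n)) + eVariationOn f (Icc (x n) (x (n+1))) := by
            gcongr
      _ = _ := h

lemma ibp_bound {a b M : ℝ} (hab : a < b) {φ : ℝ → ℝ} {G G' : ℝ → ℂ}
    (hG : ∀ x ∈ Icc a b, HasDerivAt G (G' x) x)
    (hG'i : IntervalIntegrable G' volume a b)
    (hφm : AEStronglyMeasurable φ (volume.restrict (Ioc a b)))
    (hM : ∀ x ∈ Icc a b, |φ x| ≤ M)
    (hGbd : ∀ x ∈ Icc a b, ‖G x‖ ≤ 1)
    (hBV : BoundedVariationOn φ (Icc a b)) :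
    ‖∫ x in a..b, φ x • G' x‖ ≤ 2 * M + (eVariationOn φ (Icc a b)).toReal := by
  set V : ℝ := (eVariationOn φ (Icc a b)).toReal with hV
  have hVnonneg : 0 ≤ V := ENNReal.toReal_nonneg
  -- integrability of the full integrand
  have hG'on : IntegrableOn G' (Ioc a b) volume := hG'i.1
  have hψon : IntegrableOn (fun x => φ x • G' x) (Ioc a b) volume := by
    apply Integrable.mono' (hG'on.norm.const_mul M) (hφm.smul hG'on.aestronglyMeasurable)
    rw [ae_restrict_iff' measurableSet_Ioc]
    filter_upwards with t ht
    rw [show ‖(φ • G') t‖ = ‖φ t • G' t‖ from rfl, norm_smul, Real.norm_eq_abs]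
    exact mul_le_mul_of_nonneg_right (hM t ⟨ht.1.le, ht.2⟩) (norm_nonneg _)
  have hψ : IntervalIntegrable (fun x => φ x • G' x) volume a b :=
    (intervalIntegrable_iff_integrableOn_Ioc_of_le hab.le).2 hψon
  refine le_of_forall_pos_le_add (fun ε hε => ?_)
  set ε' : ℝ := ε / (V + 1) with hε'
  have hε'pos : 0 < ε' := div_pos hε (by linarith)
  -- absolute continuity of ∫‖G'‖
  have hfin : (∫⁻ t, ‖G' t‖₊ ∂(volume.restrict (Ioc a b))) ≠ ⊤ :=
    hG'on.hasFiniteIntegral.ne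
  obtain ⟨δ, δpos, hδ⟩ := exists_pos_setLIntegral_lt_of_measure_lt
    (μ := volume.restrict (Ioc a b)) (f := fun t => ‖G' t‖₊) hfin
    (ε := ENNReal.ofReal ε') (by simp [ENNReal.ofReal_eq_zero, not_le, hε'pos])
  set δ₀ : ℝ≥0∞ := min δ 1 with hδ₀
  have hδ₀pos : 0 < δ₀.toReal := by
    rw [ENNReal.toReal_pos_iff]
    constructor
    · exact lt_min δpos (by norm_num)
    · exact lt_of_le_of_lt (min_le_right _ _) (by norm_num)
  obtain ⟨m, hm⟩ := exists_nat_gt ((b - a) / δ₀.toReal)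
  set n : ℕ := m + 1 with hn
  have hnpos : (0:ℝ) < n := by positivity
  have hstep : (b - a) / n < δ₀.toReal := by
    rw [div_lt_iff₀ hnpos]
    have h1 : (b - a) / δ₀.toReal < n := lt_of_lt_of_le hm (by exact_mod_cast Nat.le_succ m)
    calc b - a = ((b - a) / δ₀.toReal) * δ₀.toReal := by field_simp
      _ < n * δ₀.toReal := by exact mul_lt_mul_of_pos_right h1 hδ₀pos
      _ = δ₀.toReal * n := mul_comm _ _
  have hstep0 : 0 ≤ (b - a) / n := div_nonneg (by linarith) hnpos.le
  set x : ℕ → ℝ := fun i => a + i * ((b - a) / n) with hxdef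
  have hx0 : x 0 = a := by simp [hxdef]
  have hxn : x n = b := by
    simp only [hxdef]
    field_simp
    ring
  have hxmono : Monotone x := by
    intro i j hij
    simp only [hxdef]
    have : (i:ℝ) ≤ j := by exact_mod_cast hij
    nlinarith
  have hximem : ∀ i, i ≤ n → x i ∈ Icc a b := by
    intro i hi
    constructor
    · rw [← hx0]; exact hxmono (Nat.zero_le i)
    · rw [← hxn]; exact hxmono hi
  have hxsub : ∀ i, i < n → uIcc (x i) (x (i+1)) ⊆ uIcc a b := by
    intro i hi
    rw [uIcc_of_le (hxmono (Nat.le_succ i)), uIcc_of_le hab.le]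
    exact Icc_subset_Icc (hximem i hi.le).1 (hximem (i+1) hi).2
  have hIocsub : ∀ i, i < n → Ioc (x i) (x (i+1)) ⊆ Ioc a b := by
    intro i hi
    exact Ioc_subset_Ioc (hximem i hi.le).1 (hximem (i+1) hi).2
  have hψpiece : ∀ i, i < n → IntervalIntegrable (fun t => φ t • G' t) volume (x i) (x (i+1)) :=
    fun i hi => hψ.mono_set (hxsub i hi)
  have hG'piece : ∀ i, i < n → IntervalIntegrable G' volume (x i) (x (i+1)) :=
    fun i hi => hG'i.mono_set (hxsub i hi)
  -- splitting the integral
  have hsplit : ∫ t in a..b, φ t • G' t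
      = ∑ i ∈ Finset.range n, ∫ t in x i..x (i+1), φ t • G' t := by
    rw [intervalIntegral.sum_integral_adjacent_intervals hψpiece, hx0, hxn]
  -- FTC on each piece
  have hFTC : ∀ i, i < n → ∫ t in x i..x (i+1), G' t = G (x (i+1)) - G (x i) := by
    intro i hi
    refine intervalIntegral.integral_eq_sub_of_hasDerivAt (fun t ht => ?_) (hG'piece i hi)
    exact hG t ((hxsub i hi).trans (by rw [uIcc_of_le hab.le]) ht)
  -- decomposition on each piece
  have hdecomp : ∀ i, i < n → ∫ t in x i..x (i+1), φ t • G' t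
      = φ (x i) • (G (x (i+1)) - G (x i))
        + ∫ t in x i..x (i+1), (φ t - φ (x i)) • G' t := by
    intro i hi
    have h2 : ∫ t in x i..x (i+1), (φ t - φ (x i)) • G' t
        = (∫ t in x i..x (i+1), φ t • G' t) - φ (x i) • (G (x (i+1)) - G (x i)) := by
      rw [← hFTC i hi, ← intervalIntegral.integral_smul]
      have hsm : IntervalIntegrable (fun t => φ (x i) • G' t) volume (x i) (x (i+1)) :=
        (hG'piece i hi).smul (φ (x i))
      rw [← intervalIntegral.integral_sub (hψpiece i hi) hsm]
      simp only [sub_smul]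
    rw [h2]; abel
  have hMnonneg : 0 ≤ M := le_trans (abs_nonneg _) (hM a ⟨le_rfl, hab.le⟩)
  -- variation finiteness on pieces
  have hvfin : ∀ i, i < n → eVariationOn φ (Icc (x i) (x (i+1))) ≠ ⊤ := by
    intro i hi
    exact ne_top_of_le_ne_top hBV
      (eVariationOn.mono φ (Icc_subset_Icc (hximem i hi.le).1 (hximem (i+1) hi).2))
  -- the Abel part
  have hsum_dist : ∑ i ∈ Finset.range n, |φ (x (i+1)) - φ (x i)| ≤ V := by
    have hu : Monotone (fun i => x (min i n)) :=
      fun i j hij => hxmono (min_le_min hij le_rfl)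
    have h1 := eVariationOn.sum_le (f := φ) (n := n) hu (fun i => hximem _ (min_le_right _ _))
    have h2 : ∑ i ∈ Finset.range n,
        edist (φ (x (min (i+1) n))) (φ (x (min i n)))
          = ∑ i ∈ Finset.range n, ENNReal.ofReal |φ (x (i+1)) - φ (x i)| := by
      apply Finset.sum_congr rfl
      intro i hi
      have hi' := Finset.mem_range.1 hi
      rw [min_eq_left hi', min_eq_left hi'.le, edist_dist, Real.dist_eq,
        ENNReal.ofReal_eq_ofReal_iff (abs_nonneg _) (abs_nonneg _)]
    rw [h2] at h1
    have h3 := ENNReal.toReal_mono hBV h1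
    rwa [ENNReal.toReal_sum (fun i _ => ENNReal.ofReal_ne_top),
      Finset.sum_congr rfl (fun i _ => ENNReal.toReal_ofReal (abs_nonneg _))] at h3
  have hmain : ‖∑ i ∈ Finset.range n, φ (x i) • (G (x (i+1)) - G (x i))‖ ≤ 2 * M + V := by
    rw [abel_id n (fun i => φ (x i)) (fun i => G (x i))]
    have hb1 : ‖φ (x n) • G (x n)‖ ≤ M := by
      rw [norm_smul, Real.norm_eq_abs]
      calc |φ (x n)| * ‖G (x n)‖ ≤ M * 1 :=
            mul_le_mul (hM _ (hximem n le_rfl)) (hGbd _ (hximem n le_rfl)) (norm_nonneg _)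
              hMnonneg
        _ = M := mul_one M
    have hb2 : ‖φ (x 0) • G (x 0)‖ ≤ M := by
      rw [norm_smul, Real.norm_eq_abs]
      calc |φ (x 0)| * ‖G (x 0)‖ ≤ M * 1 :=
            mul_le_mul (hM _ (hximem 0 (Nat.zero_le n))) (hGbd _ (hximem 0 (Nat.zero_le n)))
              (norm_nonneg _) hMnonneg
        _ = M := mul_one M
    have hb3 : ‖∑ i ∈ Finset.range n, (φ (x (i+1)) - φ (x i)) • G (x (i+1))‖ ≤ V := by
      calc ‖∑ i ∈ Finset.range n, (φ (x (i+1)) - φ (x i)) • G (x (i+1))‖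
          ≤ ∑ i ∈ Finset.range n, ‖(φ (x (i+1)) - φ (x i)) • G (x (i+1))‖ :=
            norm_sum_le _ _
        _ ≤ ∑ i ∈ Finset.range n, |φ (x (i+1)) - φ (x i)| := by
            apply Finset.sum_le_sum
            intro i hi
            have hi' := Finset.mem_range.1 hi
            rw [norm_smul, Real.norm_eq_abs]
            calc |φ (x (i+1)) - φ (x i)| * ‖G (x (i+1))‖
                ≤ |φ (x (i+1)) - φ (x i)| * 1 :=
                  mul_le_mul_of_nonneg_left (hGbd _ (hximem (i+1) hi')) (abs_nonneg _)
              _ = _ := mul_one _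
        _ ≤ V := hsum_dist
    calc ‖φ (x n) • G (x n) - φ (x 0) • G (x 0)
            - ∑ i ∈ Finset.range n, (φ (x (i+1)) - φ (x i)) • G (x (i+1))‖
        ≤ ‖φ (x n) • G (x n) - φ (x 0) • G (x 0)‖
            + ‖∑ i ∈ Finset.range n, (φ (x (i+1)) - φ (x i)) • G (x (i+1))‖ := norm_sub_le _ _
      _ ≤ (‖φ (x n) • G (x n)‖ + ‖φ (x 0) • G (x 0)‖)
            + ‖∑ i ∈ Finset.range n, (φ (x (i+1)) - φ (x i)) • G (x (i+1))‖ := by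
          gcongr
          exact norm_sub_le _ _
      _ ≤ (M + M) + V := by gcongr
      _ = 2 * M + V := by ring
  -- the error terms
  have herr : ∀ i, i < n → ‖∫ t in x i..x (i+1), (φ t - φ (x i)) • G' t‖
      ≤ (eVariationOn φ (Icc (x i) (x (i+1)))).toReal * ε' := by
    intro i hi
    set v : ℝ := (eVariationOn φ (Icc (x i) (x (i+1)))).toReal with hv
    have hvnonneg : 0 ≤ v := ENNReal.toReal_nonneg
    have hle : x i ≤ x (i+1) := hxmono (Nat.le_succ i)
    -- bound on the lintegral of ‖G'‖ over the piece
    have hmeas_lt : (volume.restrict (Ioc a b)) (Ioc (x i) (x (i+1))) < δ := by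
      rw [Measure.restrict_apply measurableSet_Ioc]
      have hlen : x (i+1) - x i = (b - a) / n := by simp only [hxdef]; push_cast; ring
      calc volume (Ioc (x i) (x (i+1)) ∩ Ioc a b) ≤ volume (Ioc (x i) (x (i+1))) :=
            measure_mono inter_subset_left
        _ = ENNReal.ofReal ((b - a) / n) := by rw [Real.volume_Ioc, hlen]
        _ < δ₀ := by
            have h4 : ENNReal.ofReal ((b - a) / n) < ENNReal.ofReal δ₀.toReal :=
              (ENNReal.ofReal_lt_ofReal_iff hδ₀pos).2 hstep
            rwa [ENNReal.ofReal_toReal (by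
              simp only [hδ₀]
              exact ne_top_of_le_ne_top (by norm_num) (min_le_right δ 1))] at h4
        _ ≤ δ := min_le_left _ _
    have hlin := hδ _ hmeas_lt
    rw [Measure.restrict_restrict measurableSet_Ioc,
      inter_eq_self_of_subset_left (hIocsub i hi)] at hlin
    have hG'int : ∫ t in x i..x (i+1), ‖G' t‖ ≤ ε' := by
      rw [intervalIntegral.integral_of_le hle,
        integral_norm_eq_lintegral_enorm (hG'piece i hi).1.aestronglyMeasurable]
      calc (∫⁻ t in Ioc (x i) (x (i+1)), ‖G' t‖₊).toReal
          ≤ (ENNReal.ofReal ε').toReal := ENNReal.toReal_mono ENNReal.ofReal_ne_top hlin.le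
        _ = ε' := ENNReal.toReal_ofReal hε'pos.le
    have hbd : ∀ᵐ t ∂(volume.restrict (Set.uIoc (x i) (x (i+1)))), ‖(φ t - φ (x i)) • G' t‖
        ≤ v * ‖G' t‖ := by
      rw [uIoc_of_le hle, ae_restrict_iff' measurableSet_Ioc]
      filter_upwards with t ht
      rw [norm_smul, Real.norm_eq_abs]
      apply mul_le_mul_of_nonneg_right _ (norm_nonneg _)
      have h5 : edist (φ t) (φ (x i)) ≤ eVariationOn φ (Icc (x i) (x (i+1))) :=
        eVariationOn.edist_le φ ⟨ht.1.le, ht.2⟩ ⟨le_rfl, hle⟩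
      have h6 := ENNReal.toReal_mono (hvfin i hi) h5
      rwa [edist_dist, ENNReal.toReal_ofReal dist_nonneg, Real.dist_eq] at h6
    calc ‖∫ t in x i..x (i+1), (φ t - φ (x i)) • G' t‖
        ≤ |∫ t in x i..x (i+1), v * ‖G' t‖| :=
          intervalIntegral.norm_integral_le_abs_of_norm_le hbd
            (((hG'piece i hi).norm).const_mul v)
      _ = v * ∫ t in x i..x (i+1), ‖G' t‖ := by
          rw [intervalIntegral.integral_const_mul, abs_of_nonneg]
          exact mul_nonneg hvnonneg
            (intervalIntegral.integral_nonneg hle (fun t _ => norm_nonneg _))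
      _ ≤ v * ε' := mul_le_mul_of_nonneg_left hG'int hvnonneg
  have hsumv : ∑ i ∈ Finset.range n, (eVariationOn φ (Icc (x i) (x (i+1)))).toReal ≤ V := by
    have h1 := evar_sum (f := φ) hxmono n
    rw [hx0, hxn] at h1
    calc ∑ i ∈ Finset.range n, (eVariationOn φ (Icc (x i) (x (i+1)))).toReal
        = (∑ i ∈ Finset.range n, eVariationOn φ (Icc (x i) (x (i+1)))).toReal :=
          (ENNReal.toReal_sum (fun i hi => hvfin i (Finset.mem_range.1 hi))).symm
      _ ≤ V := ENNReal.toReal_mono hBV h1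
  have herrsum : ‖∑ i ∈ Finset.range n, ∫ t in x i..x (i+1), (φ t - φ (x i)) • G' t‖ ≤ ε := by
    calc ‖∑ i ∈ Finset.range n, ∫ t in x i..x (i+1), (φ t - φ (x i)) • G' t‖
        ≤ ∑ i ∈ Finset.range n, ‖∫ t in x i..x (i+1), (φ t - φ (x i)) • G' t‖ :=
          norm_sum_le _ _
      _ ≤ ∑ i ∈ Finset.range n, (eVariationOn φ (Icc (x i) (x (i+1)))).toReal * ε' :=
          Finset.sum_le_sum (fun i hi => herr i (Finset.mem_range.1 hi))
      _ = (∑ i ∈ Finset.range n, (eVariationOn φ (Icc (x i) (x (i+1)))).toReal) * ε' := by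
          rw [Finset.sum_mul]
      _ ≤ V * ε' := mul_le_mul_of_nonneg_right hsumv hε'pos.le
      _ ≤ ε := by
          rw [hε']
          rw [mul_div_assoc']
          rw [div_le_iff₀ (by linarith : (0:ℝ) < V + 1)]
          nlinarith
  rw [hsplit, Finset.sum_congr rfl (fun i hi => hdecomp i (Finset.mem_range.1 hi)),
    Finset.sum_add_distrib]
  calc ‖(∑ i ∈ Finset.range n, φ (x i) • (G (x (i+1)) - G (x i)))
          + ∑ i ∈ Finset.range n, ∫ t in x i..x (i+1), (φ t - φ (x i)) • G' t‖
      ≤ ‖∑ i ∈ Finset.range n, φ (x i) • (G (x (i+1)) - G (x i))‖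
          + ‖∑ i ∈ Finset.range n, ∫ t in x i..x (i+1), (φ t - φ (x i)) • G' t‖ :=
        norm_add_le _ _
    _ ≤ (2 * M + V) + ε := add_le_add hmain herrsum

lemma key_closed {h h' : ℝ → ℝ} {a b θ : ℝ} (hab : a < b)
    (hd : ∀ x ∈ Icc a b, HasDerivAt h (h' x) x)
    (hi : IntervalIntegrable h' volume a b)
    (hθ : 0 < θ) (hlow : ∀ x ∈ Icc a b, θ ≤ |h' x|)
    (hBV : BoundedVariationOn h' (Icc a b)) :
    ‖∫ x in a..b, Complex.exp (2 * Real.pi * Complex.I * h x)‖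
      ≤ (2 * θ⁻¹ + θ⁻¹ ^ 2 * (eVariationOn h' (Icc a b)).toReal) / (2 * Real.pi) := by
  have hπ := Real.pi_pos
  set G : ℝ → ℂ := fun x => Complex.exp (2 * Real.pi * Complex.I * h x) with hGdef
  set G' : ℝ → ℂ := fun x => (2 * Real.pi * Complex.I * h' x) * G x with hG'def
  set φ : ℝ → ℝ := fun x => (h' x)⁻¹ with hφdef
  have hGnorm : ∀ x, ‖G x‖ = 1 := fun x => norm_exp_2piI (h x)
  have hG : ∀ x ∈ Icc a b, HasDerivAt G (G' x) x := by
    intro x hx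
    have h1 : HasDerivAt (fun y => ((h y : ℝ) : ℂ)) (h' x) x := (hd x hx).ofReal_comp
    have h2 : HasDerivAt (fun y => 2 * Real.pi * Complex.I * (h y : ℂ))
        (2 * Real.pi * Complex.I * (h' x)) x := h1.const_mul (2 * Real.pi * Complex.I)
    have h3 := h2.cexp
    simpa [hGdef, hG'def, mul_comm] using h3
  have hGm : AEStronglyMeasurable G (volume.restrict (Ioc a b)) := by
    have hcont : ContinuousOn G (Icc a b) :=
      fun x hx => ((hG x hx).continuousAt.continuousWithinAt)
    exact (hcont.aestronglyMeasurable measurableSet_Icc).mono_measure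
      (Measure.restrict_mono Ioc_subset_Icc_self le_rfl)
  have h'm : AEStronglyMeasurable h' (volume.restrict (Ioc a b)) := hi.1.aestronglyMeasurable
  have hnormG' : ∀ x, ‖G' x‖ = 2 * Real.pi * |h' x| := by
    intro x
    rw [hG'def]
    simp only [norm_mul, Complex.norm_real, Real.norm_eq_abs, Complex.norm_I, hGnorm]
    rw [abs_of_nonneg hπ.le]
    norm_num
  have hG'i : IntervalIntegrable G' volume a b := by
    rw [intervalIntegrable_iff_integrableOn_Ioc_of_le hab.le]
    have haesm : AEStronglyMeasurable G' (volume.restrict (Ioc a b)) := by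
      apply AEStronglyMeasurable.mul _ hGm
      exact (Complex.continuous_ofReal.comp_aestronglyMeasurable h'm).const_mul
        (2 * Real.pi * Complex.I)
    apply Integrable.mono' (hi.1.norm.const_mul (2 * Real.pi)) haesm
    filter_upwards with t
    exact le_of_eq (by rw [hnormG' t, Real.norm_eq_abs])
  have hφm : AEStronglyMeasurable φ (volume.restrict (Ioc a b)) :=
    (h'm.aemeasurable.inv).aestronglyMeasurable
  have hMφ : ∀ x ∈ Icc a b, |φ x| ≤ θ⁻¹ := by
    intro x hx
    rw [hφdef, abs_inv]
    exact inv_anti₀ hθ (hlow x hx)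
  -- Lipschitz bound for the inverse on {θ ≤ |y|}
  set C : NNReal := (θ⁻¹ * θ⁻¹).toNNReal with hC
  have hCcoe : (C : ℝ) = θ⁻¹ * θ⁻¹ := Real.coe_toNNReal _ (by positivity)
  have hlip : LipschitzOnWith C Inv.inv {y : ℝ | θ ≤ |y|} := by
    apply LipschitzOnWith.of_dist_le_mul
    intro y hy z hz
    simp only [mem_setOf_eq] at hy hz
    have hy0 : y ≠ 0 := fun hy0 => by simp [hy0] at hy; linarith
    have hz0 : z ≠ 0 := fun hz0 => by simp [hz0] at hz; linarith
    rw [Real.dist_eq, Real.dist_eq, hCcoe]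
    have hid : y⁻¹ - z⁻¹ = (z - y) * (y⁻¹ * z⁻¹) := by field_simp
    rw [hid, abs_mul, abs_mul, abs_inv, abs_inv, abs_sub_comm]
    have h1 : |y|⁻¹ ≤ θ⁻¹ := inv_anti₀ hθ hy
    have h2 : |z|⁻¹ ≤ θ⁻¹ := inv_anti₀ hθ hz
    have h3 : (0:ℝ) ≤ |y|⁻¹ := by positivity
    have h4 : (0:ℝ) ≤ θ⁻¹ := by positivity
    have h5 : (0:ℝ) ≤ |y - z| := abs_nonneg _
    rw [mul_comm (θ⁻¹ * θ⁻¹) _]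
    apply mul_le_mul_of_nonneg_left _ h5
    exact mul_le_mul h1 h2 (by positivity) h4
  have hmaps : MapsTo h' (Icc a b) {y : ℝ | θ ≤ |y|} := fun x hx => hlow x hx
  have hφle : eVariationOn φ (Icc a b) ≤ C * eVariationOn h' (Icc a b) :=
    hlip.comp_eVariationOn_le hmaps
  have hφBV : BoundedVariationOn φ (Icc a b) :=
    ne_top_of_le_ne_top (ENNReal.mul_ne_top ENNReal.coe_ne_top hBV) hφle
  have hφV : (eVariationOn φ (Icc a b)).toReal
      ≤ θ⁻¹ ^ 2 * (eVariationOn h' (Icc a b)).toReal := by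
    have := ENNReal.toReal_mono (ENNReal.mul_ne_top ENNReal.coe_ne_top hBV) hφle
    rwa [ENNReal.toReal_mul, ENNReal.coe_toReal, hCcoe, ← sq] at this
  have hkey := ibp_bound hab hG hG'i hφm hMφ (fun x _ => le_of_eq (hGnorm x)) hφBV
  -- the basic identity
  have hid : ∫ x in a..b, φ x • G' x = (2 * Real.pi * Complex.I) * ∫ x in a..b, G x := by
    rw [← intervalIntegral.integral_const_mul]
    apply intervalIntegral.integral_congr
    intro x hx
    rw [uIcc_of_le hab.le] at hx
    have h0 : (h' x : ℂ) ≠ 0 := by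
      simp only [ne_eq, Complex.ofReal_eq_zero]
      intro h0
      have h7 := hlow x hx
      rw [h0] at h7
      simp at h7
      linarith
    rw [hφdef, hG'def]
    simp only
    rw [Complex.real_smul]
    push_cast
    field_simp
  have hnorm2 : ‖∫ x in a..b, φ x • G' x‖ = (2 * Real.pi) * ‖∫ x in a..b, G x‖ := by
    rw [hid, norm_mul]
    congr 1
    simp only [norm_mul, Complex.norm_real, Real.norm_eq_abs, Complex.norm_I]
    rw [abs_of_nonneg hπ.le]
    norm_num
  rw [le_div_iff₀ (by positivity : (0:ℝ) < 2 * Real.pi)]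
  calc ‖∫ x in a..b, G x‖ * (2 * Real.pi) = (2 * Real.pi) * ‖∫ x in a..b, G x‖ := mul_comm _ _
    _ = ‖∫ x in a..b, φ x • G' x‖ := hnorm2.symm
    _ ≤ 2 * θ⁻¹ + (eVariationOn φ (Icc a b)).toReal := hkey
    _ ≤ 2 * θ⁻¹ + θ⁻¹ ^ 2 * (eVariationOn h' (Icc a b)).toReal := by linarith

lemma exp_intervalIntegrable {h : ℝ → ℝ} {α β u v : ℝ}
    (hcont : ContinuousOn h (Ioo α β)) (hu : α ≤ u) (hv : v ≤ β) (huv : u ≤ v) :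
    IntervalIntegrable (fun x => Complex.exp (2 * Real.pi * Complex.I * h x)) volume u v := by
  set F : ℝ → ℂ := fun x => Complex.exp (2 * Real.pi * Complex.I * h x) with hF
  rw [intervalIntegrable_iff_integrableOn_Ioc_of_le huv]
  have hres : volume.restrict (Ioo α β) = volume.restrict (Ioc α β) :=
    Measure.restrict_congr_set Ioo_ae_eq_Ioc
  have haesm : AEStronglyMeasurable F (volume.restrict (Ioc α β)) := by
    rw [← hres]
    apply ContinuousOn.aestronglyMeasurable _ measurableSet_Ioo
    apply ContinuousOn.cexp
    apply ContinuousOn.mul continuousOn_const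
    exact Complex.continuous_ofReal.comp_continuousOn hcont
  apply Integrable.mono' (integrableOn_const measure_Ioc_lt_top.ne :
    IntegrableOn (fun _ => (1:ℝ)) (Ioc u v) volume)
  · exact haesm.mono_measure (Measure.restrict_mono (Ioc_subset_Ioc hu hv) le_rfl)
  · filter_upwards with t
    exact le_of_eq (norm_exp_2piI (h t))

lemma key_open {h h' : ℝ → ℝ} {α β θ : ℝ} (hab : α < β)
    (hd : ∀ x ∈ Ioo α β, HasDerivAt h (h' x) x)
    (hi : IntervalIntegrable h' volume α β)
    (hBV : BoundedVariationOn h' (Ioo α β))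
    (hθ : 0 < θ) (hlow : ∀ x ∈ Ioo α β, θ ≤ |h' x|) :
    ‖∫ x in α..β, Complex.exp (2 * Real.pi * Complex.I * h x)‖
      ≤ 1 / (Real.pi * θ) + (eVariationOn h' (Ioo α β)).toReal / (2 * Real.pi * θ ^ 2) := by
  have hπ := Real.pi_pos
  set F : ℝ → ℂ := fun x => Complex.exp (2 * Real.pi * Complex.I * h x) with hF
  have hcont : ContinuousOn h (Ioo α β) :=
    fun x hx => ((hd x hx).continuousAt.continuousWithinAt)
  set V : ℝ := (eVariationOn h' (Ioo α β)).toReal with hV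
  refine le_of_forall_pos_le_add (fun η hη => ?_)
  set ε : ℝ := min (η / 2) ((β - α) / 4) with hε
  have hεpos : 0 < ε := lt_min (by linarith) (by linarith)
  have hε2 : 2 * ε ≤ η := by
    have := min_le_left (η / 2) ((β - α) / 4)
    linarith
  have hε3 : ε ≤ (β - α) / 4 := min_le_right _ _
  set a : ℝ := α + ε with ha
  set b : ℝ := β - ε with hb
  have hab' : a < b := by simp only [ha, hb]; linarith
  have hsub : Icc a b ⊆ Ioo α β := fun x hx => ⟨by simp only [ha] at hx; linarith [hx.1],
    by simp only [hb] at hx; linarith [hx.2]⟩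
  have huIcc : uIcc a b ⊆ uIcc α β := by
    rw [uIcc_of_le hab'.le, uIcc_of_le hab.le]
    exact Icc_subset_Icc (by simp only [ha]; linarith) (by simp only [hb]; linarith)
  have hd' : ∀ x ∈ Icc a b, HasDerivAt h (h' x) x := fun x hx => hd x (hsub hx)
  have hi' : IntervalIntegrable h' volume a b := hi.mono_set huIcc
  have hBV' : BoundedVariationOn h' (Icc a b) :=
    ne_top_of_le_ne_top hBV (eVariationOn.mono h' hsub)
  have hlow' : ∀ x ∈ Icc a b, θ ≤ |h' x| := fun x hx => hlow x (hsub hx)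
  have hmid := key_closed hab' hd' hi' hθ hlow' hBV'
  have hVle : (eVariationOn h' (Icc a b)).toReal ≤ V :=
    ENNReal.toReal_mono hBV (eVariationOn.mono h' hsub)
  -- splitting
  have hint1 : IntervalIntegrable F volume α a :=
    exp_intervalIntegrable hcont le_rfl (by simp only [ha]; linarith) (by simp only [ha]; linarith)
  have hint2 : IntervalIntegrable F volume a b :=
    exp_intervalIntegrable hcont (by simp only [ha]; linarith) (by simp only [hb]; linarith) hab'.le
  have hint3 : IntervalIntegrable F volume b β :=
    exp_intervalIntegrable hcont (by simp only [hb]; linarith) le_rfl (by simp only [hb]; linarith)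
  have hsplit : ∫ x in α..β, F x = (∫ x in α..a, F x) + (∫ x in a..b, F x) + ∫ x in b..β, F x := by
    rw [← intervalIntegral.integral_add_adjacent_intervals (hint1.trans hint2) hint3,
      ← intervalIntegral.integral_add_adjacent_intervals hint1 hint2]
  have htail1 : ‖∫ x in α..a, F x‖ ≤ ε := by
    have := intervalIntegral.norm_integral_le_of_norm_le_const
      (C := 1) (f := F) (a := α) (b := a) (fun x _ => le_of_eq (norm_exp_2piI (h x)))
    rw [one_mul] at this
    apply this.trans
    rw [abs_of_nonneg (by simp only [ha]; linarith)]
    simp only [ha]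
    linarith
  have htail2 : ‖∫ x in b..β, F x‖ ≤ ε := by
    have := intervalIntegral.norm_integral_le_of_norm_le_const
      (C := 1) (f := F) (a := b) (b := β) (fun x _ => le_of_eq (norm_exp_2piI (h x)))
    rw [one_mul] at this
    apply this.trans
    rw [abs_of_nonneg (by simp only [hb]; linarith)]
    simp only [hb]
    linarith
  have halg : (2 * θ⁻¹ + θ⁻¹ ^ 2 * (eVariationOn h' (Icc a b)).toReal) / (2 * Real.pi)
      ≤ 1 / (Real.pi * θ) + V / (2 * Real.pi * θ ^ 2) := by
    rw [div_le_iff₀ (by positivity : (0:ℝ) < 2 * Real.pi)]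
    have hθ' : θ ≠ 0 := hθ.ne'
    have hπ' : Real.pi ≠ 0 := hπ.ne'
    have hexp : (1 / (Real.pi * θ) + V / (2 * Real.pi * θ ^ 2)) * (2 * Real.pi)
        = 2 * θ⁻¹ + θ⁻¹ ^ 2 * V := by
      field_simp
    rw [hexp]
    have h2 : θ⁻¹ ^ 2 * (eVariationOn h' (Icc a b)).toReal ≤ θ⁻¹ ^ 2 * V :=
      mul_le_mul_of_nonneg_left hVle (by positivity)
    linarith
  calc ‖∫ x in α..β, F x‖
      = ‖(∫ x in α..a, F x) + (∫ x in a..b, F x) + ∫ x in b..β, F x‖ := by rw [hsplit]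
    _ ≤ ‖(∫ x in α..a, F x) + (∫ x in a..b, F x)‖ + ‖∫ x in b..β, F x‖ := norm_add_le _ _
    _ ≤ (‖∫ x in α..a, F x‖ + ‖∫ x in a..b, F x‖) + ‖∫ x in b..β, F x‖ := by
        gcongr; exact norm_add_le _ _
    _ ≤ (ε + ((2 * θ⁻¹ + θ⁻¹ ^ 2 * (eVariationOn h' (Icc a b)).toReal) / (2 * Real.pi))) + ε :=
        add_le_add (add_le_add htail1 hmid) htail2
    _ ≤ 1 / (Real.pi * θ) + V / (2 * Real.pi * θ ^ 2) + η := by linarith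

/-- **Lemma 3.1.** Let `h : 𝕋 → ℝ` (realized as a `1`-periodic function on `ℝ`) be
piecewise absolutely continuous with `N` pieces determined by the points
`0 ≤ a 0 < a 1 < ⋯ < a (N-1) < 1` (cyclically completed by `a N = a 0 + 1`), with
derivative `h'` of bounded variation satisfying `|h'(x)| ≥ θ > 0` off the discontinuity
set.  Then `|∫_𝕋 e^{2πih}| ≤ N/(πθ) + Var h'/(2πθ²)`. -/
theorem stmt7 (h : ℝ → ℝ) (hper : Function.Periodic h 1)
    (N : ℕ) (hN : 0 < N) (a : ℕ → ℝ)
    (ha0 : 0 ≤ a 0) (ha1 : ∀ j, j < N → a j < 1)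
    (hamono : ∀ j, j + 1 < N → a j < a (j + 1)) (haN : a N = a 0 + 1)
    (h' : ℝ → ℝ)
    (hderiv : ∀ j < N, ∀ x ∈ Set.Ioo (a j) (a (j + 1)), HasDerivAt h (h' x) x)
    (hAC : ∀ j < N, IntervalIntegrable h' volume (a j) (a (j + 1)) ∧
      ∃ c : ℝ, ∀ x ∈ Set.Ioo (a j) (a (j + 1)), h x = c + ∫ t in (a j)..x, h' t)
    (hBV : ∀ j < N, BoundedVariationOn h' (Set.Ioo (a j) (a (j + 1))))
    (θ : ℝ) (hθ : 0 < θ)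
    (hlow : ∀ j < N, ∀ x ∈ Set.Ioo (a j) (a (j + 1)), θ ≤ |h' x|) :
    ‖∫ x in (0:ℝ)..1, Complex.exp (2 * Real.pi * Complex.I * h x)‖ ≤
      (N : ℝ) / (Real.pi * θ) +
        (∑ j ∈ Finset.range N, (eVariationOn h' (Set.Ioo (a j) (a (j + 1)))).toReal) /
          (2 * Real.pi * θ ^ 2) := by
  set F : ℝ → ℂ := fun x => Complex.exp (2 * Real.pi * Complex.I * h x) with hF
  have hFper : Function.Periodic F 1 := fun x => by simp [hF, hper x]
  have haij : ∀ j, j < N → a j < a (j + 1) := by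
    intro j hj
    by_cases hc : j + 1 < N
    · exact hamono j hc
    · have hjN : j + 1 = N := by omega
      rw [hjN, haN]
      have := ha1 j hj
      linarith
  -- integrability of F on each piece
  have hFint : ∀ j, j < N → IntervalIntegrable F volume (a j) (a (j + 1)) := by
    intro j hj
    have hcont : ContinuousOn h (Ioo (a j) (a (j + 1))) :=
      fun x hx => ((hderiv j hj x hx).continuousAt.continuousWithinAt)
    exact exp_intervalIntegrable hcont le_rfl le_rfl (haij j hj).le
  have hFintN : ∀ j, j ≤ N → IntervalIntegrable F volume (a 0) (a j) := by
    intro j hj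
    exact IntervalIntegrable.trans_iterate (fun k hk => hFint k (by omega))
  have hper01 : ∫ x in (0:ℝ)..1, F x = ∫ x in (a 0)..(a N), F x := by
    have h1 := hFper.intervalIntegral_add_eq 0 (a 0)
    rw [zero_add] at h1
    rw [h1, haN]
  have hbound : ∀ j, j < N → ‖∫ x in (a j)..(a (j + 1)), F x‖
      ≤ 1 / (Real.pi * θ) + (eVariationOn h' (Ioo (a j) (a (j + 1)))).toReal
          / (2 * Real.pi * θ ^ 2) :=
    fun j hj => key_open (haij j hj) (hderiv j hj) (hAC j hj).1 (hBV j hj) hθ (hlow j hj)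
  calc ‖∫ x in (0:ℝ)..1, F x‖
      = ‖∑ j ∈ Finset.range N, ∫ x in (a j)..(a (j + 1)), F x‖ := by
        rw [hper01, intervalIntegral.sum_integral_adjacent_intervals (fun k hk => hFint k hk)]
    _ ≤ ∑ j ∈ Finset.range N, ‖∫ x in (a j)..(a (j + 1)), F x‖ := norm_sum_le _ _
    _ ≤ ∑ j ∈ Finset.range N, (1 / (Real.pi * θ)
          + (eVariationOn h' (Ioo (a j) (a (j + 1)))).toReal / (2 * Real.pi * θ ^ 2)) :=
        Finset.sum_le_sum (fun j hj => hbound j (Finset.mem_range.1 hj))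
    _ = (N : ℝ) / (Real.pi * θ) +
        (∑ j ∈ Finset.range N, (eVariationOn h' (Set.Ioo (a j) (a (j + 1)))).toReal) /
          (2 * Real.pi * θ ^ 2) := by
        rw [Finset.sum_add_distrib, Finset.sum_const, Finset.card_range, ← Finset.sum_div]
        congr 1
        rw [nsmul_eq_mul]
        field_simp
end

section
/- Let (f_n)_{n∈ℕ} be a sequence of piecewise C¹-functions f_n : 𝕋 → ℝ₊ for which there exist constants 0 < c < C, 0 < θ < Θ, n₀ ∈ ℕ, N ∈ ℕ and finite sets D(f_n) ⊂ 𝕋 containing all discontinuity points of f_n such that: (8) f_{n−1}(x) + c ≤ f_n(x) ≤ f_{n−1}(x) + C for all n ∈ ℕ and x ∈ 𝕋 (with f₀ ≡ 0); (9) D(f_n) ⊂ D(f_{n+1}) and #D(f_n) ≤ N·n; (10) θ·n ≤ |f_n'(x)| ≤ Θ·n for all n ≥ n₀ and x ∈ 𝕋 ∖ D(f_n). Then for every t ≥ 2C·n₀ and every 0 < ε < c/4, λ_𝕋({x ∈ 𝕋 : ∃ j ∈ ℕ, |f_j(x) − t| < ε}) < (16C/(θc²))·(Nc + Θ)·ε.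 (Lemma 4.2.) -/
open MeasureTheory

lemma stmt8_lemA (g : ℝ → ℝ) (hg : ContDiff ℝ 1 g) (u v t ε m : ℝ) (hm : 0 < m)
    (hder : ∀ x ∈ Set.Ioo u v, m ≤ |deriv g x|) :
    volume {x ∈ Set.Ioo u v | |g x - t| < ε} ≤ ENNReal.ofReal (2 * ε / m) := by
  have key : ∀ a b : ℝ, a ∈ Set.Ioo u v → b ∈ Set.Ioo u v → |g a - t| < ε → |g b - t| < ε →
      a < b → b - a ≤ 2 * ε / m := by
    intro a b haI hbI hat hbt hab
    obtain ⟨z, hz, hz'⟩ := exists_hasDerivAt_eq_slope g (deriv g) hab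
      hg.continuous.continuousOn
      (fun x _ => (hg.differentiable one_ne_zero x).hasDerivAt)
    have hzI : z ∈ Set.Ioo u v := ⟨lt_of_lt_of_le haI.1 hz.1.le, lt_of_le_of_lt hz.2.le hbI.2⟩
    have h1 : m ≤ |deriv g z| := hder z hzI
    have hba : 0 < b - a := by linarith
    have h2 : |g b - g a| < 2 * ε := by
      rcases abs_lt.mp hat with ⟨h3, h4⟩
      rcases abs_lt.mp hbt with ⟨h5, h6⟩
      rw [abs_lt]; constructor <;> linarith
    rw [hz', abs_div, abs_of_pos hba, le_div_iff₀ hba] at h1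
    rw [le_div_iff₀ hm]
    nlinarith [abs_nonneg (g b - g a)]
  refine le_trans (Real.volume_le_diam _) (EMetric.diam_le ?_)
  rintro x ⟨hxI, hxt⟩ y ⟨hyI, hyt⟩
  rw [edist_dist, Real.dist_eq]
  apply ENNReal.ofReal_le_ofReal
  rcases lt_trichotomy x y with h | h | h
  · rw [abs_of_neg (by linarith : x - y < 0)]
    have := key x y hxI hyI hxt hyt h; linarith
  · subst h
    simp only [sub_self, abs_zero]
    have hε : 0 < ε := lt_of_le_of_lt (abs_nonneg _) hxt
    positivity
  · rw [abs_of_pos (by linarith : 0 < x - y)]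
    have := key y x hyI hxI hyt hxt h; linarith

lemma stmt8_lemLip (g : ℝ → ℝ) (hg : ContDiff ℝ 1 g) (u v L : ℝ)
    (hder : ∀ x ∈ Set.Ioo u v, |deriv g x| ≤ L) :
    ∀ x ∈ Set.Ioo u v, ∀ y ∈ Set.Ioo u v, |g x - g y| ≤ L * |x - y| := by
  have key : ∀ a b : ℝ, a ∈ Set.Ioo u v → b ∈ Set.Ioo u v → a < b →
      |g b - g a| ≤ L * (b - a) := by
    intro a b haI hbI hab
    obtain ⟨z, hz, hz'⟩ := exists_hasDerivAt_eq_slope g (deriv g) hab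
      hg.continuous.continuousOn
      (fun x _ => (hg.differentiable one_ne_zero x).hasDerivAt)
    have hzI : z ∈ Set.Ioo u v := ⟨lt_of_lt_of_le haI.1 hz.1.le, lt_of_le_of_lt hz.2.le hbI.2⟩
    have h1 : |deriv g z| ≤ L := hder z hzI
    have hba : 0 < b - a := by linarith
    rw [hz', abs_div, abs_of_pos hba, div_le_iff₀ hba] at h1
    linarith
  intro x hx y hy
  rcases lt_trichotomy x y with h | h | h
  · rw [abs_of_neg (by linarith : x - y < 0)]
    have := key x y hx hy h
    rw [abs_sub_comm]; linarith
  · subst h; simp only [sub_self, abs_zero, mul_zero, le_refl]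
  · rw [abs_of_pos (by linarith : 0 < x - y)]
    exact key y x hy hx h


set_option maxHeartbeats 1000000 in
/-- **Lemma 4.2.** Let `(f_n)` be piecewise `C¹` positive functions on `𝕋` (realized as
`1`-periodic functions on `ℝ`, with discontinuity sets contained in the finite sets
`D n ⊆ [0,1)`), satisfying (8) `f_{n-1} + c ≤ f_n ≤ f_{n-1} + C` (with `f₀ ≡ 0`),
(9) `D n ⊆ D (n+1)` and `#D n ≤ N n`, and (10) `θn ≤ |f_n'| ≤ Θn` off `D n` for
`n ≥ n₀`.  Then for every `t ≥ 2Cn₀` and `0 < ε < c/4`,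
`λ({x : ∃ j, |f_j(x) − t| < ε}) < (16C/(θc²))(Nc + Θ)ε`. -/
theorem stmt8 (f : ℕ → ℝ → ℝ) (hper : ∀ n, Function.Periodic (f n) 1)
    (hf0 : ∀ x, f 0 x = 0)
    (hpos : ∀ n, 1 ≤ n → ∀ x, 0 < f n x)
    (c C θ Θ : ℝ) (hc : 0 < c) (hcC : c < C) (hθ : 0 < θ) (hθΘ : θ < Θ)
    (n₀ N : ℕ)
    (D : ℕ → Set ℝ)
    (hDfin : ∀ n, 1 ≤ n → (D n).Finite)
    (hDsub : ∀ n, 1 ≤ n → D n ⊆ Set.Ico 0 1)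
    (h8 : ∀ n : ℕ, 1 ≤ n → ∀ x : ℝ, f (n - 1) x + c ≤ f n x ∧ f n x ≤ f (n - 1) x + C)
    (h9 : ∀ n : ℕ, 1 ≤ n → D n ⊆ D (n + 1) ∧ (D n).ncard ≤ N * n)
    (hpw : ∀ n : ℕ, 1 ≤ n → ∀ u v : ℝ, u < v →
      Set.Ioo u v ∩ {x : ℝ | Int.fract x ∈ D n} = ∅ →
      ∃ g : ℝ → ℝ, ContDiff ℝ 1 g ∧ Set.EqOn (f n) g (Set.Ioo u v))
    (h10 : ∀ n : ℕ, 1 ≤ n → n₀ ≤ n → ∀ x : ℝ, Int.fract x ∉ D n →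
      θ * n ≤ |deriv (f n) x| ∧ |deriv (f n) x| ≤ Θ * n) :
    ∀ t : ℝ, 2 * C * n₀ ≤ t → ∀ ε : ℝ, 0 < ε → ε < c / 4 →
      volume {x ∈ Set.Ico (0:ℝ) 1 | ∃ j : ℕ, 1 ≤ j ∧ |f j x - t| < ε} <
        ENNReal.ofReal (16 * C / (θ * c ^ 2) * (N * c + Θ) * ε) := by
  classical
  intro t ht ε hε hεc
  have hC : 0 < C := hc.trans hcC
  have hΘ : 0 < Θ := hθ.trans hθΘ
  have hRHSpos : 0 < 16 * C / (θ * c ^ 2) * (N * c + Θ) * ε := by positivity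
  by_cases hS : {x ∈ Set.Ico (0:ℝ) 1 | ∃ j : ℕ, 1 ≤ j ∧ |f j x - t| < ε}.Nonempty
  swap
  · rw [Set.not_nonempty_iff_eq_empty] at hS
    rw [hS, measure_empty]
    exact ENNReal.ofReal_pos.mpr hRHSpos
  -- growth of f
  have hgrow : ∀ (a k : ℕ) (x : ℝ), f a x + c * k ≤ f (a + k) x ∧ f (a + k) x ≤ f a x + C * k := by
    intro a k x
    induction k with
    | zero => simp
    | succ k ih =>
      have h := h8 (a + k + 1) (by omega) x
      have hsub : a + k + 1 - 1 = a + k := by omega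
      rw [hsub] at h
      push_cast
      constructor
      · calc f a x + c * (k + 1) = (f a x + c * k) + c := by ring
          _ ≤ f (a + k) x + c := by linarith [ih.1]
          _ ≤ f (a + (k + 1)) x := by
              have : a + (k + 1) = a + k + 1 := by omega
              rw [this]; exact h.1
      · calc f (a + (k + 1)) x = f (a + k + 1) x := rfl
          _ ≤ f (a + k) x + C := h.2
          _ ≤ f a x + C * (k + 1) := by push_cast at ih ⊢; linarith [ih.2]
  have hlow : ∀ (j : ℕ) (x : ℝ), c * j ≤ f j x := by
    intro j x
    have := (hgrow 0 j x).1
    simpa [hf0 x] using this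
  have hhigh : ∀ (j : ℕ) (x : ℝ), f j x ≤ C * j := by
    intro j x
    have := (hgrow 0 j x).2
    simpa [hf0 x] using this
  -- t is not too small
  obtain ⟨x₀, hx₀I, j₀, hj₀, hj₀t⟩ := hS
  have ht3 : 3 * ε < t := by
    have h1 : c * 1 ≤ c * (j₀ : ℝ) := by
      have : (1 : ℝ) ≤ (j₀ : ℝ) := by exact_mod_cast hj₀
      nlinarith
    have h2 := hlow j₀ x₀
    have h3 := (abs_lt.mp hj₀t).2
    linarith
  have htε : 0 < t - ε := by linarith
  -- j₂
  set j₂ : ℕ := ⌊(t + ε) / c⌋₊ with hj₂def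
  have hj₂le : (j₂ : ℝ) ≤ (t + ε) / c := Nat.floor_le (div_nonneg (by linarith) hc.le)
  have hj₂c : (j₂ : ℝ) * c ≤ t + ε := by
    rw [← le_div_iff₀ hc]; exact hj₂le
  -- membership facts
  have hmemJ : ∀ (j : ℕ) (x : ℝ), 1 ≤ j → |f j x - t| < ε →
      j ≤ j₂ ∧ n₀ ≤ j ∧ t - ε < C * j := by
    intro j x hj1 hjt
    rcases abs_lt.mp hjt with ⟨hl, hr⟩
    have hlo := hlow j x
    have hhi := hhigh j x
    have hCj : t - ε < C * j := by linarith
    constructor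
    · apply Nat.le_floor
      rw [le_div_iff₀ hc]
      nlinarith
    refine ⟨?_, hCj⟩
    have h2n : (2 * n₀ : ℝ) < (j : ℝ) + 1 := by
      have hCn : C * (2 * (n₀:ℝ)) ≤ t := by push_cast; linarith
      have hεC : ε < C := by linarith
      nlinarith
    have : 2 * n₀ < j + 1 := by exact_mod_cast h2n
    omega
  have hj₂1 : 1 ≤ j₂ := le_trans hj₀ (hmemJ j₀ x₀ hj₀ hj₀t).1
  have hj₂1R : (1 : ℝ) ≤ (j₂ : ℝ) := by exact_mod_cast hj₂1
  -- case N = 0 : contradiction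
  rcases Nat.eq_zero_or_pos N with hN0 | hN1
  · exfalso
    have hj₀facts := hmemJ j₀ x₀ hj₀ hj₀t
    have hD0 : D j₀ = ∅ := by
      have h := (h9 j₀ hj₀).2
      rw [hN0, Nat.zero_mul, Nat.le_zero] at h
      exact ((Set.ncard_eq_zero (hDfin j₀ hj₀)).mp h)
    obtain ⟨g, hg, hEq⟩ := hpw j₀ hj₀ (-1) 2 (by norm_num)
      (by rw [hD0]; simp)
    have h01 : g 0 = g 1 := by
      have e0 : g 0 = f j₀ 0 := (hEq (by norm_num : (0:ℝ) ∈ Set.Ioo (-1:ℝ) 2)).symm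
      have e1 : g 1 = f j₀ 1 := (hEq (by norm_num : (1:ℝ) ∈ Set.Ioo (-1:ℝ) 2)).symm
      have hp := hper j₀ 0
      rw [zero_add] at hp
      rw [e0, e1, hp]
    obtain ⟨z, hz, hz0⟩ := exists_deriv_eq_zero (by norm_num : (0:ℝ) < 1)
      hg.continuous.continuousOn h01
    have hzmem : Set.Ioo (-1:ℝ) 2 ∈ nhds z :=
      isOpen_Ioo.mem_nhds (by constructor <;> [linarith [hz.1]; linarith [hz.2]])
    have hfg : f j₀ =ᶠ[nhds z] g := Filter.eventuallyEq_of_mem hzmem hEq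
    have hder := (h10 j₀ hj₀ hj₀facts.2.1 z (by rw [hD0]; exact Set.notMem_empty _)).1
    rw [hfg.deriv_eq, hz0, abs_zero] at hder
    have hpos' : (0:ℝ) < θ * j₀ := by
      have h1j : (1:ℝ) ≤ (j₀:ℝ) := by exact_mod_cast hj₀
      nlinarith
    linarith
  -- main case : N ≥ 1
  have hN1R : (1:ℝ) ≤ (N:ℝ) := by exact_mod_cast hN1
  have hDfin₂ := hDfin j₂ hj₂1
  set P : Finset ℝ := insert (0:ℝ) hDfin₂.toFinset with hPdef
  have hmemP : ∀ x : ℝ, x ∈ P ↔ x = 0 ∨ x ∈ D j₂ := by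
    intro x
    simp [hPdef, Set.Finite.mem_toFinset]
  have hPrng : ∀ d ∈ P, 0 ≤ d ∧ d < 1 := by
    intro d hd
    rcases (hmemP d).mp hd with rfl | hd'
    · exact ⟨le_rfl, one_pos⟩
    · exact ⟨(hDsub j₂ hj₂1 hd').1, (hDsub j₂ hj₂1 hd').2⟩
  have hMcard : (P.card : ℝ) ≤ (N:ℝ) * (j₂:ℝ) + 1 := by
    have h1 : P.card ≤ hDfin₂.toFinset.card + 1 := Finset.card_insert_le _ _
    have h2 : hDfin₂.toFinset.card = (D j₂).ncard := (Set.ncard_eq_toFinset_card _ hDfin₂).symm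
    have h3 := (h9 j₂ hj₂1).2
    have h4 : P.card ≤ N * j₂ + 1 := by omega
    exact_mod_cast h4
  -- next point function
  set nxt : ℝ → ℝ := fun d => (insert (1:ℝ) (P.filter (fun p => d < p))).min'
    (Finset.insert_nonempty _ _) with hnxtdef
  have hnxt_lt : ∀ d ∈ P, d < nxt d := by
    intro d hd
    rw [hnxtdef]
    rw [Finset.lt_min'_iff]
    intro y hy
    rcases Finset.mem_insert.mp hy with rfl | hy'
    · exact (hPrng d hd).2
    · exact (Finset.mem_filter.mp hy').2
  have hnxt_le1 : ∀ d : ℝ, nxt d ≤ 1 := by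
    intro d
    exact Finset.min'_le _ _ (Finset.mem_insert_self _ _)
  have hnxt_no : ∀ d : ℝ, ∀ p ∈ P, d < p → nxt d ≤ p := by
    intro d p hp hdp
    exact Finset.min'_le _ _ (Finset.mem_insert_of_mem (Finset.mem_filter.mpr ⟨hp, hdp⟩))
  -- chain for D
  have hchain : ∀ j, 1 ≤ j → j ≤ j₂ → D j ⊆ D j₂ := by
    intro j hj1 hjle
    have hgen : ∀ k, D j ⊆ D (j + k) := by
      intro k
      induction k with
      | zero => exact subset_rfl
      | succ k ih =>
        exact fun x hx => (h9 (j + k) (by omega)).1 (ih hx)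
    obtain ⟨k, hk⟩ := Nat.exists_eq_add_of_le hjle
    rw [hk]
    exact hgen k
  -- arcs avoid discontinuities
  have hclean : ∀ d ∈ P, ∀ j, 1 ≤ j → j ≤ j₂ →
      Set.Ioo d (nxt d) ∩ {x : ℝ | Int.fract x ∈ D j} = ∅ := by
    intro d hd j hj1 hjle
    rw [Set.eq_empty_iff_forall_notMem]
    rintro x ⟨hxI, hxD⟩
    have h0d := (hPrng d hd).1
    have hx0 : 0 ≤ x := le_of_lt (lt_of_le_of_lt h0d hxI.1)
    have hx1 : x < 1 := lt_of_lt_of_le hxI.2 (hnxt_le1 d)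
    simp only [Set.mem_setOf_eq] at hxD
    rw [Int.fract_eq_self.mpr ⟨hx0, hx1⟩] at hxD
    have hxP : x ∈ P := (hmemP x).mpr (Or.inr (hchain j hj1 hjle hxD))
    exact absurd (hnxt_no d x hxP hxI.1) (not_le.mpr hxI.2)
  -- covering
  have hcover : ∀ x ∈ Set.Ico (0:ℝ) 1, x ∉ (P : Set ℝ) →
      ∃ d ∈ P, x ∈ Set.Ioo d (nxt d) := by
    intro x hxI hxP
    have hx0 : x ≠ 0 := by
      intro h; exact hxP (by rw [h]; exact_mod_cast Finset.mem_insert_self _ _)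
    have hx0' : 0 < x := lt_of_le_of_ne hxI.1 (Ne.symm hx0)
    have hQne : (P.filter (fun p => p < x)).Nonempty :=
      ⟨0, Finset.mem_filter.mpr ⟨Finset.mem_insert_self _ _, hx0'⟩⟩
    set d := (P.filter (fun p => p < x)).max' hQne with hddef
    have hdmem : d ∈ P.filter (fun p => p < x) := Finset.max'_mem _ _
    have hdP : d ∈ P := (Finset.mem_filter.mp hdmem).1
    have hdx : d < x := (Finset.mem_filter.mp hdmem).2
    refine ⟨d, hdP, hdx, ?_⟩
    rw [hnxtdef]
    rw [Finset.lt_min'_iff]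
    intro y hy
    rcases Finset.mem_insert.mp hy with rfl | hy'
    · exact hxI.2
    · rcases Finset.mem_filter.mp hy' with ⟨hyP, hdy⟩
      by_contra hxy
      push_neg at hxy
      have hyx : y < x := lt_of_le_of_ne hxy (fun h => hxP (by rw [← h]; exact_mod_cast hyP))
      have hyQ : y ∈ P.filter (fun p => p < x) := Finset.mem_filter.mpr ⟨hyP, hyx⟩
      have hyd : y ≤ d := Finset.le_max' _ y hyQ
      linarith
  -- notation
  set A : ℕ → Set ℝ := fun j => {x : ℝ | |f j x - t| < ε} with hAdef
  set J : Finset ℕ := Finset.Icc 1 j₂ with hJdef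
  set K : ℝ := 2 * ε * C / (θ * (t - ε)) with hKdef
  have hK : 0 < K := by rw [hKdef]; positivity
  -- per-arc per-level volume bound
  have hvolAj : ∀ d ∈ P, ∀ j, 1 ≤ j → (A j ∩ Set.Ioo d (nxt d)).Nonempty →
      volume (A j ∩ Set.Ioo d (nxt d)) ≤ ENNReal.ofReal K := by
    rintro d hd j hj1 ⟨x, hxA, hxI⟩
    obtain ⟨hjle, hn₀j, hCj⟩ := hmemJ j x hj1 hxA
    obtain ⟨g, hg, hEq⟩ := hpw j hj1 d (nxt d) (hnxt_lt d hd) (hclean d hd j hj1 hjle)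
    have hseteq : A j ∩ Set.Ioo d (nxt d) = {y ∈ Set.Ioo d (nxt d) | |g y - t| < ε} := by
      ext y
      constructor
      · rintro ⟨hyA, hyI⟩
        exact ⟨hyI, by rw [← hEq hyI]; exact hyA⟩
      · rintro ⟨hyI, hyg⟩
        refine ⟨?_, hyI⟩
        show |f j y - t| < ε
        rw [hEq hyI]; exact hyg
    have hderlow : ∀ y ∈ Set.Ioo d (nxt d), θ * j ≤ |deriv g y| := by
      intro y hyI
      have hfg : f j =ᶠ[nhds y] g := Filter.eventuallyEq_of_mem (isOpen_Ioo.mem_nhds hyI) hEq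
      rw [← hfg.deriv_eq]
      have hyD : Int.fract y ∉ D j := by
        intro hyD
        have hmem : y ∈ Set.Ioo d (nxt d) ∩ {x : ℝ | Int.fract x ∈ D j} := ⟨hyI, hyD⟩
        rw [hclean d hd j hj1 hjle] at hmem
        exact hmem
      exact (h10 j hj1 hn₀j y hyD).1
    have hj1R : (1:ℝ) ≤ (j:ℝ) := by exact_mod_cast hj1
    have hθj : 0 < θ * (j:ℝ) := mul_pos hθ (by linarith)
    calc volume (A j ∩ Set.Ioo d (nxt d))
        = volume {y ∈ Set.Ioo d (nxt d) | |g y - t| < ε} := by rw [hseteq]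
      _ ≤ ENNReal.ofReal (2 * ε / (θ * j)) :=
          stmt8_lemA g hg d (nxt d) t ε (θ * j) hθj hderlow
      _ ≤ ENNReal.ofReal K := by
          apply ENNReal.ofReal_le_ofReal
          rw [hKdef, div_le_div_iff₀ hθj (by positivity)]
          nlinarith [mul_lt_mul_of_pos_left hCj (by positivity : (0:ℝ) < 2 * ε * θ)]
  -- Lipschitz bound for f j on arcs
  have hLipf : ∀ d ∈ P, ∀ j, 1 ≤ j → j ≤ j₂ → n₀ ≤ j →
      ∀ y ∈ Set.Ioo d (nxt d), ∀ z ∈ Set.Ioo d (nxt d),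
      |f j y - f j z| ≤ Θ * (j:ℝ) * |y - z| := by
    intro d hd j hj1 hjle hn₀j y hy z hz
    obtain ⟨g, hg, hEq⟩ := hpw j hj1 d (nxt d) (hnxt_lt d hd) (hclean d hd j hj1 hjle)
    have hderhi : ∀ w ∈ Set.Ioo d (nxt d), |deriv g w| ≤ Θ * j := by
      intro w hwI
      have hfg : f j =ᶠ[nhds w] g := Filter.eventuallyEq_of_mem (isOpen_Ioo.mem_nhds hwI) hEq
      rw [← hfg.deriv_eq]
      have hwD : Int.fract w ∉ D j := by
        intro hwD
        have hmem : w ∈ Set.Ioo d (nxt d) ∩ {x : ℝ | Int.fract x ∈ D j} := ⟨hwI, hwD⟩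
        rw [hclean d hd j hj1 hjle] at hmem
        exact hmem
      exact (h10 j hj1 hn₀j w hwD).2
    have hl := stmt8_lemLip g hg d (nxt d) (Θ * j) hderhi y hy z hz
    rwa [hEq hy, hEq hz]
  -- counting bound
  have hcount : ∀ d ∈ P,
      (((J.filter (fun j => (A j ∩ Set.Ioo d (nxt d)).Nonempty)).card : ℝ)) * c ≤
        2 * ε + Θ * (j₂:ℝ) * (nxt d - d) + c := by
    intro d hd
    have hlen : 0 < nxt d - d := by linarith [hnxt_lt d hd]
    set T := J.filter (fun j => (A j ∩ Set.Ioo d (nxt d)).Nonempty) with hTdef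
    by_cases hT : T.Nonempty
    swap
    · rw [Finset.not_nonempty_iff_eq_empty.mp hT]
      simp only [Finset.card_empty, Nat.cast_zero, zero_mul]
      nlinarith [mul_nonneg (mul_nonneg hΘ.le (Nat.cast_nonneg (α := ℝ) j₂)) hlen.le]
    set a := T.min' hT with hadef
    set b := T.max' hT with hbdef
    have haT : a ∈ T := Finset.min'_mem _ _
    have hbT : b ∈ T := Finset.max'_mem _ _
    have hab : a ≤ b := Finset.min'_le _ _ hbT
    obtain ⟨haJ, hane⟩ := Finset.mem_filter.mp haT
    obtain ⟨hbJ, hbne⟩ := Finset.mem_filter.mp hbT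
    have ha1 : 1 ≤ a := (Finset.mem_Icc.mp haJ).1
    have hb1 : 1 ≤ b := (Finset.mem_Icc.mp hbJ).1
    have hbj₂ : b ≤ j₂ := (Finset.mem_Icc.mp hbJ).2
    obtain ⟨xa, hxaA, hxaI⟩ := hane
    obtain ⟨xb, hxbA, hxbI⟩ := hbne
    have hxaA' : |f a xa - t| < ε := hxaA
    have hxbA' : |f b xb - t| < ε := hxbA
    have hbfacts := hmemJ b xb hb1 hxbA
    -- Lipschitz control
    have hL : |f b xa - f b xb| ≤ Θ * (j₂:ℝ) * (nxt d - d) := by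
      have h1 := hLipf d hd b hb1 hbj₂ hbfacts.2.1 xa hxaI xb hxbI
      have h2 : |xa - xb| ≤ nxt d - d := by
        rw [abs_le]
        constructor
        · linarith [hxaI.1, hxaI.2, hxbI.1, hxbI.2]
        · linarith [hxaI.1, hxaI.2, hxbI.1, hxbI.2]
      have hbj₂R : (b:ℝ) ≤ (j₂:ℝ) := by exact_mod_cast hbj₂
      have h3 : Θ * (b:ℝ) * |xa - xb| ≤ Θ * (j₂:ℝ) * (nxt d - d) := by
        have h4 : (b:ℝ) * |xa - xb| ≤ (j₂:ℝ) * (nxt d - d) :=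
          mul_le_mul hbj₂R h2 (abs_nonneg _) (Nat.cast_nonneg _)
        have h5 := mul_le_mul_of_nonneg_left h4 hΘ.le
        linarith
      linarith
    -- growth control
    have hgr : f a xa + c * ((b:ℝ) - (a:ℝ)) ≤ f b xa := by
      have h1 := (hgrow a (b - a) xa).1
      have h2 : a + (b - a) = b := by omega
      rw [h2] at h1
      have h3 : ((b - a : ℕ) : ℝ) = (b:ℝ) - (a:ℝ) := by
        rw [Nat.cast_sub hab]
      rwa [h3] at h1
    have hfa : t - ε < f a xa := by
      have := (abs_lt.mp hxaA').1; linarith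
    have hfb : f b xb < t + ε := by
      have := (abs_lt.mp hxbA').2; linarith
    have hkey : c * ((b:ℝ) - (a:ℝ)) ≤ 2 * ε + Θ * (j₂:ℝ) * (nxt d - d) := by
      have h4 : f b xa - f b xb ≤ |f b xa - f b xb| := le_abs_self _
      linarith
    -- card bound
    have hcardT : T.card ≤ b + 1 - a := by
      have hsub : T ⊆ Finset.Icc a b := by
        intro j hj
        exact Finset.mem_Icc.mpr ⟨Finset.min'_le _ _ hj, Finset.le_max' _ _ hj⟩
      have := Finset.card_le_card hsub
      rwa [Nat.card_Icc] at this
    have hcardR : (T.card : ℝ) ≤ (b:ℝ) - (a:ℝ) + 1 := by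
      have h5 : ((b + 1 - a : ℕ) : ℝ) = (b:ℝ) + 1 - (a:ℝ) := by
        rw [Nat.cast_sub (by omega)]; push_cast; ring
      have h6 := (Nat.cast_le (α := ℝ)).mpr hcardT
      rw [h5] at h6
      linarith
    calc (T.card : ℝ) * c ≤ ((b:ℝ) - (a:ℝ) + 1) * c :=
          mul_le_mul_of_nonneg_right hcardR hc.le
      _ = c * ((b:ℝ) - (a:ℝ)) + c := by ring
      _ ≤ 2 * ε + Θ * (j₂:ℝ) * (nxt d - d) + c := by linarith
  -- disjointness of arcs and total length
  have hdisj : (P : Set ℝ).PairwiseDisjoint (fun d => Set.Ioo d (nxt d)) := by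
    intro d hd e he hde
    have hdP : d ∈ P := hd
    have heP : e ∈ P := he
    rcases lt_or_gt_of_ne hde with h | h
    · apply Set.disjoint_left.mpr
      rintro x ⟨hx1, hx2⟩ ⟨hx3, hx4⟩
      have := hnxt_no d e heP h
      linarith
    · apply Set.disjoint_left.mpr
      rintro x ⟨hx1, hx2⟩ ⟨hx3, hx4⟩
      have := hnxt_no e d hdP h
      linarith
  have hsubIcc : (⋃ d ∈ P, Set.Ioo d (nxt d)) ⊆ Set.Icc (0:ℝ) 1 := by
    intro x hx
    obtain ⟨d, hd, hxd⟩ := Set.mem_iUnion₂.mp hx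
    exact ⟨le_of_lt (lt_of_le_of_lt (hPrng d hd).1 hxd.1),
      le_of_lt (lt_of_lt_of_le hxd.2 (hnxt_le1 d))⟩
  have hlensum : ∑ d ∈ P, (nxt d - d) ≤ 1 := by
    have h2 : ∑ d ∈ P, ENNReal.ofReal (nxt d - d) ≤ 1 := by
      have h3 : ∀ d ∈ P, ENNReal.ofReal (nxt d - d) = volume (Set.Ioo d (nxt d)) :=
        fun d _ => (Real.volume_Ioo).symm
      rw [Finset.sum_congr rfl h3]
      calc ∑ d ∈ P, volume (Set.Ioo d (nxt d))
          = volume (⋃ d ∈ P, Set.Ioo d (nxt d)) :=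
            (measure_biUnion_finset hdisj (fun d _ => measurableSet_Ioo)).symm
        _ ≤ volume (Set.Icc (0:ℝ) 1) := measure_mono hsubIcc
        _ = 1 := by rw [Real.volume_Icc]; norm_num
    rw [← ENNReal.ofReal_le_one]
    calc ENNReal.ofReal (∑ d ∈ P, (nxt d - d))
        = ∑ d ∈ P, ENNReal.ofReal (nxt d - d) :=
          ENNReal.ofReal_sum_of_nonneg (fun d hd => le_of_lt (by linarith [hnxt_lt d hd]))
      _ ≤ 1 := h2
  -- covering inclusion
  have hcov2 : {x ∈ Set.Ico (0:ℝ) 1 | ∃ j : ℕ, 1 ≤ j ∧ |f j x - t| < ε} ⊆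
      (↑P : Set ℝ) ∪ ⋃ d ∈ P, ⋃ j ∈ J, (A j ∩ Set.Ioo d (nxt d)) := by
    rintro x ⟨hxI, j, hj1, hjt⟩
    by_cases hxP : x ∈ (P : Set ℝ)
    · exact Or.inl hxP
    · obtain ⟨d, hd, hxd⟩ := hcover x hxI hxP
      right
      refine Set.mem_biUnion hd (Set.mem_biUnion ?_ ⟨hjt, hxd⟩)
      exact Finset.mem_Icc.mpr ⟨hj1, (hmemJ j x hj1 hjt).1⟩
  -- per-arc sum bound
  set φ : ℝ → ℝ := fun d => K * (2 * ε / c + 1) + K * Θ * (j₂:ℝ) / c * (nxt d - d) with hφdef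
  have hφnonneg : ∀ d ∈ P, 0 ≤ φ d := by
    intro d hd
    have hl := hnxt_lt d hd
    rw [hφdef]
    have h1 : (0:ℝ) ≤ (j₂:ℝ) := Nat.cast_nonneg _
    have h2 : 0 ≤ nxt d - d := by linarith
    positivity
  have hper_arc : ∀ d ∈ P, ∑ j ∈ J, volume (A j ∩ Set.Ioo d (nxt d)) ≤
      ENNReal.ofReal (φ d) := by
    intro d hd
    calc ∑ j ∈ J, volume (A j ∩ Set.Ioo d (nxt d))
        ≤ ∑ j ∈ J, (if (A j ∩ Set.Ioo d (nxt d)).Nonempty then ENNReal.ofReal K else 0) := by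
          apply Finset.sum_le_sum
          intro j hj
          split_ifs with h
          · exact hvolAj d hd j (Finset.mem_Icc.mp hj).1 h
          · rw [Set.not_nonempty_iff_eq_empty.mp h, measure_empty]
      _ = ∑ j ∈ J.filter (fun j => (A j ∩ Set.Ioo d (nxt d)).Nonempty), ENNReal.ofReal K :=
          (Finset.sum_filter _ _).symm
      _ = ((J.filter (fun j => (A j ∩ Set.Ioo d (nxt d)).Nonempty)).card : ENNReal) *
            ENNReal.ofReal K := by rw [Finset.sum_const, nsmul_eq_mul]
      _ = ENNReal.ofReal
            (((J.filter (fun j => (A j ∩ Set.Ioo d (nxt d)).Nonempty)).card : ℝ) * K) := by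
          rw [← ENNReal.ofReal_natCast
            ((J.filter (fun j => (A j ∩ Set.Ioo d (nxt d)).Nonempty)).card),
            ← ENNReal.ofReal_mul (Nat.cast_nonneg _)]
      _ ≤ ENNReal.ofReal (φ d) := by
          apply ENNReal.ofReal_le_ofReal
          have h1 : (((J.filter (fun j => (A j ∩ Set.Ioo d (nxt d)).Nonempty)).card : ℝ)) ≤
              (2 * ε + Θ * (j₂:ℝ) * (nxt d - d) + c) / c := by
            rw [le_div_iff₀ hc]
            exact hcount d hd
          have h2 := mul_le_mul_of_nonneg_right h1 hK.le
          calc (((J.filter (fun j => (A j ∩ Set.Ioo d (nxt d)).Nonempty)).card : ℝ)) * K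
              ≤ (2 * ε + Θ * (j₂:ℝ) * (nxt d - d) + c) / c * K := h2
            _ = φ d := by rw [hφdef]; field_simp; ring
  -- evaluate the sum of φ
  have hsum_eq : ∑ d ∈ P, φ d = (P.card : ℝ) * (K * (2 * ε / c + 1)) +
      K * Θ * (j₂:ℝ) / c * (∑ d ∈ P, (nxt d - d)) := by
    rw [hφdef]
    rw [Finset.sum_add_distrib, Finset.sum_const, nsmul_eq_mul, ← Finset.mul_sum]
  -- final real estimate
  have hcoeff : 0 ≤ K * Θ * (j₂:ℝ) / c := by positivity
  have hsum_le : ∑ d ∈ P, φ d ≤ (P.card : ℝ) * (K * (2 * ε / c + 1)) + K * Θ * (j₂:ℝ) / c := by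
    rw [hsum_eq]
    have h6 := mul_le_mul_of_nonneg_left hlensum hcoeff
    linarith
  have hfinal : (P.card : ℝ) * (K * (2 * ε / c + 1)) + K * Θ * (j₂:ℝ) / c <
      16 * C / (θ * c ^ 2) * ((N:ℝ) * c + Θ) * ε := by
    have hLHSeq : (P.card : ℝ) * (K * (2 * ε / c + 1)) + K * Θ * (j₂:ℝ) / c =
        2 * ε * C * ((P.card : ℝ) * (2 * ε + c) + Θ * (j₂:ℝ)) / (θ * (t - ε) * c) := by
      rw [hKdef]; field_simp
    have hRHSeq : 16 * C / (θ * c ^ 2) * ((N:ℝ) * c + Θ) * ε =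
        16 * C * ((N:ℝ) * c + Θ) * ε / (θ * c ^ 2) := by ring
    rw [hLHSeq, hRHSeq, div_lt_div_iff₀ (by positivity) (by positivity)]
    have hm2 : (P.card : ℝ) ≤ 2 * (N:ℝ) * (j₂:ℝ) := by nlinarith
    have key : c * ((P.card : ℝ) * (2 * ε + c) + Θ * (j₂:ℝ)) <
        8 * ((N:ℝ) * c + Θ) * (t - ε) := by
      have hA : (P.card : ℝ) * (2 * ε + c) ≤ (2 * (N:ℝ) * (j₂:ℝ)) * ((3/2) * c) :=
        mul_le_mul hm2 (by linarith) (by linarith) (by positivity)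
      have hB : (j₂:ℝ) * c ≤ 2 * (t - ε) := by linarith
      nlinarith [mul_pos hΘ htε, mul_le_mul_of_nonneg_left hB
        (by positivity : (0:ℝ) ≤ 3 * (N:ℝ) * c),
        mul_le_mul_of_nonneg_left hB hΘ.le,
        mul_le_mul_of_nonneg_left hA hc.le]
    calc 2 * ε * C * ((P.card : ℝ) * (2 * ε + c) + Θ * (j₂:ℝ)) * (θ * c ^ 2)
        = (2 * ε * C * θ * c) * (c * ((P.card : ℝ) * (2 * ε + c) + Θ * (j₂:ℝ))) := by ring
      _ < (2 * ε * C * θ * c) * (8 * ((N:ℝ) * c + Θ) * (t - ε)) :=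
          mul_lt_mul_of_pos_left key (by positivity)
      _ = 16 * C * ((N:ℝ) * c + Θ) * ε * (θ * (t - ε) * c) := by ring
  -- assemble
  calc volume {x ∈ Set.Ico (0:ℝ) 1 | ∃ j : ℕ, 1 ≤ j ∧ |f j x - t| < ε}
      ≤ volume ((↑P : Set ℝ) ∪ ⋃ d ∈ P, ⋃ j ∈ J, (A j ∩ Set.Ioo d (nxt d))) :=
        measure_mono hcov2
    _ ≤ volume (↑P : Set ℝ) + volume (⋃ d ∈ P, ⋃ j ∈ J, (A j ∩ Set.Ioo d (nxt d))) :=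
        measure_union_le _ _
    _ = volume (⋃ d ∈ P, ⋃ j ∈ J, (A j ∩ Set.Ioo d (nxt d))) := by
        rw [(P.finite_toSet).measure_zero volume, zero_add]
    _ ≤ ∑ d ∈ P, volume (⋃ j ∈ J, (A j ∩ Set.Ioo d (nxt d))) := measure_biUnion_finset_le _ _
    _ ≤ ∑ d ∈ P, ∑ j ∈ J, volume (A j ∩ Set.Ioo d (nxt d)) :=
        Finset.sum_le_sum (fun d _ => measure_biUnion_finset_le _ _)
    _ ≤ ∑ d ∈ P, ENNReal.ofReal (φ d) := Finset.sum_le_sum hper_arc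
    _ = ENNReal.ofReal (∑ d ∈ P, φ d) := (ENNReal.ofReal_sum_of_nonneg hφnonneg).symm
    _ < ENNReal.ofReal (16 * C / (θ * c ^ 2) * ((N:ℝ) * c + Θ) * ε) := by
        rw [ENNReal.ofReal_lt_ofReal_iff hRHSpos]
        linarith
end

section
/- Let T : (X, 𝓑, μ) → (X, 𝓑, μ) be an ergodic automorphism of a standard probability Borel space and let A ∈ 𝓑. For every ε > 0, δ > 0 and κ > 0 there exist N = N(ε,δ,κ) ∈ ℕ and a set X(ε,δ,κ) ∈ 𝓑 with μ(X(ε,δ,κ)) > 1 − δ such that for all M, L ∈ ℕ with L ≥ N and L/M ≥ κ, |(1/L) · Σ_{n=M}^{M+L} χ_A(Tⁿx) − μ(A)| < ε for every x ∈ X(ε,δ,κ). (Lemma 5.2.) -/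
open MeasureTheory Filter Finset Function
open scoped ENNReal NNReal

set_option linter.unusedSectionVars false
set_option linter.unusedVariables false
set_option maxHeartbeats 1000000

private lemma le_of_all_pos_le_add {a b : ℝ} (h : ∀ ε : ℝ, 0 < ε → a ≤ b + ε) : a ≤ b := by
  by_contra hc
  push_neg at hc
  have := h ((a - b) / 2) (by linarith)
  linarith

private lemma limsup_le_limsup_of_tendsto_sub {u v : ℕ → ℝ}
    (hu0 : ∀ n, 0 ≤ u n) (hv1 : ∀ n, v n ≤ 1)
    (h : Tendsto (fun n => u n - v n) atTop (nhds 0)) :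
    limsup u atTop ≤ limsup v atTop := by
  have hbv : IsBoundedUnder (· ≤ ·) atTop v := isBoundedUnder_of ⟨1, fun n => hv1 n⟩
  have hcu : IsCoboundedUnder (· ≤ ·) atTop u :=
    isCoboundedUnder_le_of_le atTop (x := 0) (fun n => hu0 n)
  refine le_of_all_pos_le_add fun ε hε => ?_
  have h1 : ∀ᶠ n in atTop, v n < limsup v atTop + ε / 2 :=
    eventually_lt_of_limsup_lt (by linarith) hbv
  have h2 : ∀ᶠ n in atTop, |u n - v n| < ε / 2 := by
    have := Metric.tendsto_atTop.1 h (ε / 2) (by linarith)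
    obtain ⟨N, hN⟩ := this
    filter_upwards [eventually_ge_atTop N] with n hn
    simpa [Real.dist_eq] using hN n hn
  refine limsup_le_of_le hcu ?_
  filter_upwards [h1, h2] with n h1 h2
  have := abs_lt.1 h2
  linarith

private lemma limsup_eq_limsup_of_tendsto_sub {u v : ℕ → ℝ}
    (hu : ∀ n, u n ∈ Set.Icc (0:ℝ) 1) (hv : ∀ n, v n ∈ Set.Icc (0:ℝ) 1)
    (h : Tendsto (fun n => u n - v n) atTop (nhds 0)) :
    limsup u atTop = limsup v atTop := by
  refine le_antisymm
    (limsup_le_limsup_of_tendsto_sub (fun n => (hu n).1) (fun n => (hv n).2) h)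
    (limsup_le_limsup_of_tendsto_sub (fun n => (hv n).1) (fun n => (hu n).2) ?_)
  have := h.neg
  simpa using this

private lemma limsup_const_sub_eq {u : ℕ → ℝ} (r : ℝ)
    (hu0 : ∀ n, 0 ≤ u n) (hu1 : ∀ n, u n ≤ 1) :
    limsup (fun n => r - u n) atTop = r - liminf u atTop := by
  have hbu : IsBoundedUnder (· ≤ ·) atTop u := isBoundedUnder_of ⟨1, hu1⟩
  have hbu' : IsBoundedUnder (· ≥ ·) atTop u := isBoundedUnder_of ⟨0, hu0⟩
  have hcu : IsCoboundedUnder (· ≥ ·) atTop u := hbu.isCoboundedUnder_ge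
  have hb1 : IsBoundedUnder (· ≤ ·) atTop (fun n => r - u n) :=
    isBoundedUnder_of ⟨r, fun n => by linarith [hu0 n]⟩
  have hc1 : IsCoboundedUnder (· ≤ ·) atTop (fun n => r - u n) :=
    isCoboundedUnder_le_of_le atTop (x := r - 1) (fun n => by linarith [hu1 n])
  refine le_antisymm ?_ ?_
  · refine le_of_all_pos_le_add fun ε hε => ?_
    have h1 : ∀ᶠ n in atTop, liminf u atTop - ε < u n :=
      eventually_lt_of_lt_liminf (by linarith) hbu'
    refine limsup_le_of_le hc1 ?_
    filter_upwards [h1] with n h1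
    linarith
  · have : ∀ ε : ℝ, 0 < ε → r - liminf u atTop ≤ limsup (fun n => r - u n) atTop + ε := by
      intro ε hε
      have h1 : ∀ᶠ n in atTop, r - u n < limsup (fun n => r - u n) atTop + ε :=
        eventually_lt_of_limsup_lt (by linarith) hb1
      have h2 : liminf u atTop ≥ r - limsup (fun n => r - u n) atTop - ε := by
        refine le_liminf_of_le hcu ?_
        filter_upwards [h1] with n h1
        linarith
      linarith
    exact le_of_all_pos_le_add this

section Birkhoff
variable {X : Type*} [MeasurableSpace X] {μ : Measure X} {T : X → X} {g : X → ℝ}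

private lemma bS_nonneg (hg0 : ∀ x, 0 ≤ g x) (n : ℕ) (x : X) :
    0 ≤ birkhoffSum T g n x := Finset.sum_nonneg fun _ _ => hg0 _

private lemma bS_le (hg1 : ∀ x, g x ≤ 1) (n : ℕ) (x : X) :
    birkhoffSum T g n x ≤ n := by
  calc birkhoffSum T g n x ≤ ∑ _k ∈ Finset.range n, (1:ℝ) :=
        Finset.sum_le_sum fun _ _ => hg1 _
    _ = n := by simp

private lemma bav_mem (hg0 : ∀ x, 0 ≤ g x) (hg1 : ∀ x, g x ≤ 1) (n : ℕ) (x : X) :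
    (n:ℝ)⁻¹ * birkhoffSum T g n x ∈ Set.Icc (0:ℝ) 1 := by
  constructor
  · exact mul_nonneg (by positivity) (bS_nonneg hg0 n x)
  · rcases Nat.eq_zero_or_pos n with h | h
    · simp [h]
    · have hn : (0:ℝ) < n := by exact_mod_cast h
      rw [inv_mul_le_iff₀ hn, mul_one]
      exact bS_le hg1 n x

private lemma measurable_bS (hT : Measurable T) (hg : Measurable g) (n : ℕ) :
    Measurable (fun x => birkhoffSum T g n x) := by
  have : (fun x => birkhoffSum T g n x) = fun x => ∑ k ∈ Finset.range n, g (T^[k] x) := rfl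
  rw [this]
  exact Finset.measurable_sum _ fun k _ => hg.comp (hT.iterate k)

/-- The limsup of Birkhoff averages is invariant under `T`. -/
private lemma limsup_bav_comp (hg0 : ∀ x, 0 ≤ g x) (hg1 : ∀ x, g x ≤ 1) (x : X) :
    limsup (fun n : ℕ => (n:ℝ)⁻¹ * birkhoffSum T g n (T x)) atTop
      = limsup (fun n : ℕ => (n:ℝ)⁻¹ * birkhoffSum T g n x) atTop := by
  have key : Tendsto (fun n : ℕ =>
      (n:ℝ)⁻¹ * birkhoffSum T g n (T x) - ((n+1:ℕ):ℝ)⁻¹ * birkhoffSum T g (n+1) x)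
      atTop (nhds 0) := by
    apply squeeze_zero_norm' (a := fun n : ℕ => 2 / (n:ℝ))
    · filter_upwards [eventually_ge_atTop 1] with n hn
      have hn0 : (0:ℝ) < n := by exact_mod_cast hn
      set s := birkhoffSum T g n (T x) with hs
      have hsuc : birkhoffSum T g (n+1) x = g x + s := birkhoffSum_succ' T g n x
      have hcast : ((n+1:ℕ):ℝ) = (n:ℝ) + 1 := by push_cast; ring
      have e : (n:ℝ)⁻¹ * s - ((n:ℝ)+1)⁻¹ * (g x + s)
          = (s - n * g x) / ((n:ℝ) * ((n:ℝ)+1)) := by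
        field_simp
        ring
      rw [hsuc, hcast, e]
      have hs0 : 0 ≤ s := bS_nonneg hg0 n (T x)
      have hsn : s ≤ n := bS_le hg1 n (T x)
      have habs : |s - n * g x| ≤ (n:ℝ) := by
        rw [abs_le]
        have h1 : 0 ≤ (n:ℝ) * g x := mul_nonneg hn0.le (hg0 x)
        have h2 : (n:ℝ) * g x ≤ n := by
          calc (n:ℝ) * g x ≤ (n:ℝ) * 1 := mul_le_mul_of_nonneg_left (hg1 x) hn0.le
            _ = n := mul_one _
        constructor <;> linarith
      rw [Real.norm_eq_abs, abs_div, abs_of_pos (mul_pos hn0 (by linarith : (0:ℝ) < (n:ℝ)+1))]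
      rw [div_le_div_iff₀ (mul_pos hn0 (by linarith : (0:ℝ) < (n:ℝ)+1)) hn0]
      calc |s - n * g x| * n ≤ (n:ℝ) * n := by
            exact mul_le_mul_of_nonneg_right habs hn0.le
        _ ≤ 2 * ((n:ℝ) * ((n:ℝ)+1)) := by nlinarith
    · exact tendsto_const_div_atTop_nhds_zero_nat 2
  have h1 : limsup (fun n : ℕ => (n:ℝ)⁻¹ * birkhoffSum T g n (T x)) atTop
      = limsup (fun n : ℕ => ((n+1:ℕ):ℝ)⁻¹ * birkhoffSum T g (n+1) x) atTop :=
    limsup_eq_limsup_of_tendsto_sub (fun n : ℕ => bav_mem hg0 hg1 n (T x))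
      (fun n : ℕ => bav_mem hg0 hg1 (n+1) x) key
  rw [h1]
  exact limsup_nat_add (fun n : ℕ => (n:ℝ)⁻¹ * birkhoffSum T g n x) 1


/-- Key lemma: the a.e.-constant limsup of Birkhoff averages is at most the space average. -/
private lemma birkhoff_limsup_le [IsProbabilityMeasure μ] (hT : Ergodic T μ)
    (hg : Measurable g) (hg0 : ∀ x, 0 ≤ g x) (hg1 : ∀ x, g x ≤ 1) :
    ∃ c : ℝ,
      (∀ᵐ x ∂μ, limsup (fun n : ℕ => (n:ℝ)⁻¹ * birkhoffSum T g n x) atTop = c) ∧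
      c ≤ ∫ x, g x ∂μ := by
  have hTm : Measurable T := hT.toMeasurePreserving.measurable
  set φ : X → ℝ := fun x => limsup (fun n : ℕ => (n:ℝ)⁻¹ * birkhoffSum T g n x) atTop with hφdef
  have havm : ∀ n : ℕ, Measurable fun x => (n:ℝ)⁻¹ * birkhoffSum T g n x :=
    fun n => (measurable_bS hTm hg n).const_mul _
  have hφm : Measurable φ := Measurable.limsup havm
  have hφ01 : ∀ x, φ x ∈ Set.Icc (0:ℝ) 1 := by
    intro x
    constructor
    · exact le_limsup_of_frequently_le
        (Frequently.of_forall fun n => (bav_mem hg0 hg1 n x).1)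
        (isBoundedUnder_of ⟨1, fun n => (bav_mem hg0 hg1 n x).2⟩)
    · exact limsup_le_of_le
        (isCoboundedUnder_le_of_le atTop (x := 0) fun n => (bav_mem hg0 hg1 n x).1)
        (Eventually.of_forall fun n => (bav_mem hg0 hg1 n x).2)
  have hφT : φ ∘ T = φ := funext fun x => limsup_bav_comp hg0 hg1 x
  obtain ⟨c, hc⟩ := hT.toPreErgodic.ae_eq_const_of_ae_eq_comp hφm hφT
  refine ⟨c, hc.mono fun x hx => hx, ?_⟩
  have hne : (ae μ).NeBot := ae_neBot.2 (IsProbabilityMeasure.ne_zero μ)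
  obtain ⟨x₀, hx₀⟩ := hc.exists
  have hc0 : 0 ≤ c := by rw [show c = φ x₀ from hx₀.symm]; exact (hφ01 x₀).1
  have hc1 : c ≤ 1 := by rw [show c = φ x₀ from hx₀.symm]; exact (hφ01 x₀).2
  have hgint : Integrable g μ := by
    refine Integrable.mono' (integrable_const (1:ℝ)) hg.aestronglyMeasurable
      (Eventually.of_forall fun x => ?_)
    rw [Real.norm_eq_abs, abs_of_nonneg (hg0 x)]; exact hg1 x
  refine le_of_all_pos_le_add fun ε hε => ?_
  by_cases hcε : c ≤ ε
  · have h0 : 0 ≤ ∫ x, g x ∂μ := integral_nonneg hg0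
    linarith
  push_neg at hcε
  set α : ℝ := c - ε/2 with hα
  have hα0 : 0 ≤ α := by rw [hα]; linarith
  have hα1 : α ≤ 1 := by rw [hα]; linarith
  set G : Set X := φ ⁻¹' {c} with hG
  have hGm : MeasurableSet G := hφm (measurableSet_singleton c)
  have hμG : μ G = 1 := by
    rw [← prob_compl_eq_zero_iff hGm]
    have hGc : Gᶜ = {x | ¬ φ x = c} := by ext x; simp [hG]
    rw [hGc]
    have := ae_iff.1 hc
    simpa [Function.const] using this
  have hGT : ∀ x ∈ G, T x ∈ G := by
    intro x hx
    have h1 : φ (T x) = φ x := congrFun hφT x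
    have h2 : φ x = c := hx
    show φ (T x) ∈ ({c} : Set ℝ)
    rw [h1, h2]; rfl
  have hGiter : ∀ (k : ℕ), ∀ x ∈ G, T^[k] x ∈ G := by
    intro k
    induction k with
    | zero => intro x hx; simpa using hx
    | succ k ih =>
      intro x hx
      rw [Function.iterate_succ_apply]
      exact ih _ (hGT x hx)
  have hfreq : ∀ x ∈ G, ∃ n : ℕ, 1 ≤ n ∧ α * n < birkhoffSum T g n x := by
    intro x hx
    have hxc : φ x = c := hx
    have hlt : α < limsup (fun n : ℕ => (n:ℝ)⁻¹ * birkhoffSum T g n x) atTop := by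
      have : α < c := by rw [hα]; linarith
      rwa [← hxc] at this
    have hfr := frequently_lt_of_lt_limsup
      (isCoboundedUnder_le_of_le atTop (x := 0) fun n => (bav_mem hg0 hg1 n x).1) hlt
    obtain ⟨n, hav, hn1⟩ := (hfr.and_eventually (eventually_ge_atTop 1)).exists
    have hn0 : (0:ℝ) < n := by exact_mod_cast hn1
    refine ⟨n, hn1, ?_⟩
    rw [inv_mul_eq_div, lt_div_iff₀ hn0] at hav
    exact hav
  set E : ℕ → Set X := fun M => G ∩ ⋃ n ∈ Set.Icc 1 M, {x | α * n < birkhoffSum T g n x}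
    with hE
  have hEm : ∀ M, MeasurableSet (E M) := by
    intro M
    refine hGm.inter (MeasurableSet.biUnion (Set.to_countable _) fun n _ => ?_)
    exact measurableSet_lt measurable_const (measurable_bS hTm hg n)
  have hEmono : Monotone E := by
    intro M M' hMM' x hx
    obtain ⟨hxG, hxU⟩ := hx
    refine ⟨hxG, ?_⟩
    rw [Set.mem_iUnion₂] at hxU ⊢
    obtain ⟨n, hn, hxn⟩ := hxU
    exact ⟨n, ⟨hn.1, le_trans hn.2 hMM'⟩, hxn⟩
  have hEUnion : (⋃ M, E M) = G := by
    ext x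
    constructor
    · rintro ⟨s, ⟨M, rfl⟩, hxG, _⟩
      exact hxG
    · intro hx
      obtain ⟨n, hn1, hn⟩ := hfreq x hx
      refine Set.mem_iUnion.2 ⟨n, hx, ?_⟩
      rw [Set.mem_iUnion₂]
      exact ⟨n, ⟨hn1, le_refl n⟩, hn⟩
  have hμE : Tendsto (fun M => μ (E M)) atTop (nhds 1) := by
    have h := tendsto_measure_iUnion_atTop (μ := μ) hEmono
    rwa [hEUnion, hμG] at h
  have hlt1 : (1:ℝ≥0∞) - ENNReal.ofReal (ε/2) < 1 :=
    ENNReal.sub_lt_self (by simp) (by simp) (by simp [ENNReal.ofReal_pos]; linarith)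
  obtain ⟨M, hM⟩ := (hμE.eventually (eventually_gt_nhds hlt1)).exists
  set B : Set X := (E M)ᶜ with hB
  have hBm : MeasurableSet B := (hEm M).compl
  have hμB : (μ B).toReal ≤ ε/2 := by
    have h1 : μ B = 1 - μ (E M) := by
      rw [hB, measure_compl (hEm M) (measure_ne_top μ _), measure_univ]
    have h2 : μ B ≤ ENNReal.ofReal (ε/2) := by
      rw [h1, tsub_le_iff_right]
      calc (1:ℝ≥0∞) ≤ (1 - ENNReal.ofReal (ε/2)) + ENNReal.ofReal (ε/2) := le_tsub_add
        _ ≤ μ (E M) + ENNReal.ofReal (ε/2) := add_le_add_left hM.le _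
        _ = ENNReal.ofReal (ε/2) + μ (E M) := add_comm _ _
    calc (μ B).toReal ≤ (ENNReal.ofReal (ε/2)).toReal :=
          ENNReal.toReal_mono (by simp) h2
      _ = ε/2 := ENNReal.toReal_ofReal (by linarith)
  set g' : X → ℝ := fun x => g x + B.indicator (fun _ => (1:ℝ)) x with hg'def
  have hg'm : Measurable g' := hg.add (measurable_const.indicator hBm)
  have hg'0 : ∀ x, 0 ≤ g' x := fun x =>
    add_nonneg (hg0 x) (Set.indicator_nonneg (fun _ _ => zero_le_one) x)
  have hg'2 : ∀ x, g' x ≤ 2 := by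
    intro x
    have h1 : B.indicator (fun _ => (1:ℝ)) x ≤ 1 := by
      by_cases hx : x ∈ B <;> simp [Set.indicator_of_mem, Set.indicator_of_notMem, hx]
    have := hg1 x
    simp only [hg'def]
    linarith
  have hgle : ∀ x, g x ≤ g' x := fun x =>
    le_add_of_nonneg_right (Set.indicator_nonneg (fun _ _ => zero_le_one) x)
  have key : ∀ K : ℕ, ∀ x ∈ G, α * ((K:ℝ) - M) ≤ birkhoffSum T g' K x := by
    intro K
    induction K using Nat.strong_induction_on with
    | _ K ih =>
      intro x hx
      rcases le_or_gt K M with hKM | hKM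
      · have h1 : (K:ℝ) - M ≤ 0 := by
          have : (K:ℝ) ≤ M := by exact_mod_cast hKM
          linarith
        exact le_trans (mul_nonpos_of_nonneg_of_nonpos hα0 h1) (bS_nonneg hg'0 K x)
      · by_cases hxE : x ∈ E M
        · obtain ⟨hxG, hxU⟩ := hxE
          rw [Set.mem_iUnion₂] at hxU
          obtain ⟨n, hn, hxn⟩ := hxU
          have hn1 : 1 ≤ n := hn.1
          have hnK : n ≤ K := le_trans hn.2 hKM.le
          have hsplit : birkhoffSum T g' K x
              = birkhoffSum T g' n x + birkhoffSum T g' (K - n) (T^[n] x) := by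
            conv_lhs => rw [← Nat.add_sub_cancel' hnK]
            exact birkhoffSum_add T g' n (K - n) x
          have h1 : birkhoffSum T g n x ≤ birkhoffSum T g' n x :=
            Finset.sum_le_sum fun k _ => hgle _
          have h2 := ih (K - n) (by omega) (T^[n] x) (hGiter n x hx)
          have hxn' : α * n < birkhoffSum T g n x := hxn
          have hcast : ((K - n : ℕ):ℝ) = (K:ℝ) - n := by
            rw [Nat.cast_sub hnK]
          rw [hcast] at h2
          have hring : α * ((K:ℝ) - M) = α * n + α * (((K:ℝ) - n) - M) := by ring
          rw [hsplit, hring]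
          linarith
        · have hxB : x ∈ B := hxE
          have hK1 : 1 ≤ K := by omega
          have hsplit : birkhoffSum T g' K x = g' x + birkhoffSum T g' (K - 1) (T x) := by
            conv_lhs => rw [show K = (K - 1) + 1 by omega]
            exact birkhoffSum_succ' T g' (K - 1) x
          have h2 := ih (K - 1) (by omega) (T x) (hGT x hx)
          have hcast : ((K - 1 : ℕ):ℝ) = (K:ℝ) - 1 := by
            rw [Nat.cast_sub hK1]; simp
          rw [hcast] at h2
          have hgx : (1:ℝ) ≤ g' x := by
            have hi : B.indicator (fun _ => (1:ℝ)) x = 1 := Set.indicator_of_mem hxB _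
            simp only [hg'def, hi]
            linarith [hg0 x]
          have hring : α * ((K:ℝ) - M) = α * 1 + α * (((K:ℝ) - 1) - M) := by ring
          rw [hsplit, hring]
          have hα1' : α * 1 ≤ g' x := by rw [mul_one]; linarith
          linarith
  have hg'int : Integrable g' μ := by
    refine Integrable.mono' (integrable_const (2:ℝ)) hg'm.aestronglyMeasurable
      (Eventually.of_forall fun x => ?_)
    rw [Real.norm_eq_abs, abs_of_nonneg (hg'0 x)]; exact hg'2 x
  have hcomp : ∀ k : ℕ, Integrable (fun x => g' (T^[k] x)) μ := fun k =>
    ((hT.toMeasurePreserving.iterate k).integrable_comp hg'int.aestronglyMeasurable).2 hg'int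
  have hSint : ∀ K : ℕ, Integrable (fun x => birkhoffSum T g' K x) μ := by
    intro K
    have h : (fun x => birkhoffSum T g' K x)
        = fun x => ∑ k ∈ Finset.range K, g' (T^[k] x) := rfl
    rw [h]
    exact integrable_finset_sum _ fun k _ => hcomp k
  have hIS : ∀ K : ℕ, ∫ x, birkhoffSum T g' K x ∂μ = K * ∫ x, g' x ∂μ := by
    intro K
    have h2 : ∀ k : ℕ, ∫ x, g' (T^[k] x) ∂μ = ∫ x, g' x ∂μ := by
      intro k
      calc ∫ x, g' (T^[k] x) ∂μ = ∫ y, g' y ∂(Measure.map (T^[k]) μ) :=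
            (integral_map (hTm.iterate k).aemeasurable hg'm.aestronglyMeasurable).symm
        _ = ∫ x, g' x ∂μ := by rw [(hT.toMeasurePreserving.iterate k).map_eq]
    have h1 : ∫ x, birkhoffSum T g' K x ∂μ = ∑ k ∈ Finset.range K, ∫ x, g' (T^[k] x) ∂μ := by
      rw [show (fun x => birkhoffSum T g' K x)
        = fun x => ∑ k ∈ Finset.range K, g' (T^[k] x) from rfl]
      exact integral_finset_sum _ fun k _ => hcomp k
    rw [h1]
    simp [h2, Finset.sum_const, nsmul_eq_mul]
  have hKey2 : ∀ K : ℕ, α * ((K:ℝ) - M) ≤ K * ∫ x, g' x ∂μ := by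
    intro K
    have hind : ∀ x, G.indicator (fun _ => α * ((K:ℝ) - M)) x ≤ birkhoffSum T g' K x := by
      intro x
      by_cases hx : x ∈ G
      · rw [Set.indicator_of_mem hx]; exact key K x hx
      · rw [Set.indicator_of_notMem hx]; exact bS_nonneg hg'0 K x
    have hint : ∫ x, G.indicator (fun _ => α * ((K:ℝ) - M)) x ∂μ
        ≤ ∫ x, birkhoffSum T g' K x ∂μ :=
      integral_mono ((integrable_const _).indicator hGm) (hSint K) hind
    rw [integral_indicator_const _ hGm, measureReal_def, hμG, ENNReal.toReal_one, one_smul, hIS K] at hint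
    exact hint
  have hαle : α ≤ ∫ x, g' x ∂μ := by
    have hlim : Tendsto (fun K : ℕ => α * (1 - (M:ℝ)/K)) atTop (nhds (α * (1 - 0))) :=
      (tendsto_const_nhds.sub (tendsto_const_div_atTop_nhds_zero_nat (M:ℝ))).const_mul α
    rw [sub_zero, mul_one] at hlim
    refine le_of_tendsto hlim ?_
    filter_upwards [eventually_ge_atTop 1] with K hK
    have hK0 : (0:ℝ) < K := by exact_mod_cast hK
    have heq : α * (1 - (M:ℝ)/K) = α * ((K:ℝ) - M) / K := by
      field_simp
    rw [heq, div_le_iff₀ hK0]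
    calc α * ((K:ℝ) - M) ≤ K * ∫ x, g' x ∂μ := hKey2 K
      _ = (∫ x, g' x ∂μ) * K := by ring
  have hIg' : ∫ x, g' x ∂μ = (∫ x, g x ∂μ) + (μ B).toReal := by
    simp only [hg'def]
    rw [integral_add hgint ((integrable_const _).indicator hBm),
      integral_indicator_const _ hBm]
    simp [measureReal_def]
  rw [hIg'] at hαle
  rw [hα] at hαle
  linarith

/-- **Pointwise (Birkhoff) ergodic theorem for indicator functions.** -/
private lemma birkhoff_ae [IsProbabilityMeasure μ] (hT : Ergodic T μ)
    {A : Set X} (hA : MeasurableSet A) :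
    ∀ᵐ x ∂μ, Tendsto (fun n : ℕ => (n:ℝ)⁻¹ * birkhoffSum T (A.indicator fun _ => (1:ℝ)) n x)
      atTop (nhds ((μ A).toReal)) := by
  set f : X → ℝ := A.indicator fun _ => (1:ℝ) with hfdef
  set f2 : X → ℝ := Aᶜ.indicator fun _ => (1:ℝ) with hf2def
  have hf : Measurable f := measurable_const.indicator hA
  have hf2 : Measurable f2 := measurable_const.indicator hA.compl
  have hf0 : ∀ x, 0 ≤ f x := fun x => Set.indicator_nonneg (fun _ _ => zero_le_one) x
  have hf1 : ∀ x, f x ≤ 1 := by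
    intro x; by_cases hx : x ∈ A <;> simp [hfdef, hx]
  have hf20 : ∀ x, 0 ≤ f2 x := fun x => Set.indicator_nonneg (fun _ _ => zero_le_one) x
  have hf21 : ∀ x, f2 x ≤ 1 := by
    intro x; by_cases hx : x ∈ Aᶜ <;> simp [hf2def, hx]
  have hsum : ∀ x, f x + f2 x = 1 := by
    intro x; by_cases hx : x ∈ A <;> simp [hfdef, hf2def, hx]
  have hIf : ∫ x, f x ∂μ = (μ A).toReal := by
    rw [hfdef, integral_indicator_const _ hA]; simp [measureReal_def]
  have hIf2 : ∫ x, f2 x ∂μ = 1 - (μ A).toReal := by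
    rw [hf2def, integral_indicator_const _ hA.compl, measureReal_def, measure_compl hA (measure_ne_top μ A),
      measure_univ, ENNReal.toReal_sub_of_le prob_le_one (by simp)]
    simp
  obtain ⟨c₁, hc₁, hc₁le⟩ := birkhoff_limsup_le hT hf hf0 hf1
  obtain ⟨c₂, hc₂, hc₂le⟩ := birkhoff_limsup_le hT hf2 hf20 hf21
  rw [hIf] at hc₁le
  rw [hIf2] at hc₂le
  have hrel : ∀ x, limsup (fun n : ℕ => (n:ℝ)⁻¹ * birkhoffSum T f2 n x) atTop
      = 1 - liminf (fun n : ℕ => (n:ℝ)⁻¹ * birkhoffSum T f n x) atTop := by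
    intro x
    have hev : ∀ᶠ n : ℕ in atTop,
        (n:ℝ)⁻¹ * birkhoffSum T f2 n x = 1 - (n:ℝ)⁻¹ * birkhoffSum T f n x := by
      filter_upwards [eventually_ge_atTop 1] with n hn
      have hn0' : (0:ℝ) < n := by exact_mod_cast hn
      have hn0 : (n:ℝ) ≠ 0 := ne_of_gt hn0'
      have hSS : birkhoffSum T f2 n x = n - birkhoffSum T f n x := by
        have hh : birkhoffSum T f n x + birkhoffSum T f2 n x = n := by
          rw [show birkhoffSum T f n x = ∑ k ∈ Finset.range n, f (T^[k] x) from rfl,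
            show birkhoffSum T f2 n x = ∑ k ∈ Finset.range n, f2 (T^[k] x) from rfl,
            ← Finset.sum_add_distrib]
          simp [hsum]
        linarith
      rw [hSS, mul_sub, inv_mul_cancel₀ hn0]
    rw [limsup_congr hev]
    exact limsup_const_sub_eq 1 (fun n => (bav_mem hf0 hf1 n x).1)
      (fun n => (bav_mem hf0 hf1 n x).2)
  have hliminf : ∀ᵐ x ∂μ,
      liminf (fun n : ℕ => (n:ℝ)⁻¹ * birkhoffSum T f n x) atTop = 1 - c₂ := by
    filter_upwards [hc₂] with x hx
    have h := hrel x
    rw [hx] at h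
    linarith
  have hne : (ae μ).NeBot := ae_neBot.2 (IsProbabilityMeasure.ne_zero μ)
  obtain ⟨x₀, hx₀1, hx₀2⟩ := (hc₁.and hliminf).exists
  have hll : liminf (fun n : ℕ => (n:ℝ)⁻¹ * birkhoffSum T f n x₀) atTop
      ≤ limsup (fun n : ℕ => (n:ℝ)⁻¹ * birkhoffSum T f n x₀) atTop :=
    liminf_le_limsup (isBoundedUnder_of ⟨1, fun n => (bav_mem hf0 hf1 n x₀).2⟩)
      (isBoundedUnder_of ⟨0, fun n => (bav_mem hf0 hf1 n x₀).1⟩)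
  rw [hx₀1, hx₀2] at hll
  have hI1 : c₁ = (μ A).toReal := le_antisymm hc₁le (by linarith)
  have hI2 : (1:ℝ) - c₂ = (μ A).toReal := by linarith
  filter_upwards [hc₁, hliminf] with x h1 h2
  exact tendsto_of_liminf_eq_limsup (by rw [h2, hI2]) (by rw [h1, hI1])
    (isBoundedUnder_of ⟨1, fun n => (bav_mem hf0 hf1 n x).2⟩)
    (isBoundedUnder_of ⟨0, fun n => (bav_mem hf0 hf1 n x).1⟩)


end Birkhoff

/-- **Lemma 5.2.** Let `T` be an ergodic automorphism of a standard probability Borel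
space `(X, 𝓑, μ)` and `A ∈ 𝓑`.  For all `ε, δ, κ > 0` there are `N ∈ ℕ` and a measurable
set of measure `> 1 − δ` on which every Birkhoff average `(1/L) ∑_{n=M}^{M+L} χ_A(Tⁿx)`
with `L ≥ N`, `L/M ≥ κ` is `ε`-close to `μ(A)`. -/
theorem stmt9 {X : Type*} [MeasurableSpace X] [StandardBorelSpace X]
    (μ : Measure X) [IsProbabilityMeasure μ]
    (T : X → X) (hbij : Function.Bijective T) (hT : Ergodic T μ)
    (A : Set X) (hA : MeasurableSet A)
    (ε δ κ : ℝ) (hε : 0 < ε) (hδ : 0 < δ) (hκ : 0 < κ) :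
    ∃ N : ℕ, ∃ Z : Set X, MeasurableSet Z ∧ μ Z > ENNReal.ofReal (1 - δ) ∧
      ∀ M L : ℕ, N ≤ L → κ ≤ (L : ℝ) / (M : ℝ) → ∀ x ∈ Z,
        |(1 / (L : ℝ)) * ∑ n ∈ Finset.Icc M (M + L), A.indicator (fun _ => (1 : ℝ)) (T^[n] x)
            - (μ A).toReal| < ε := by
  classical
  set f : X → ℝ := A.indicator fun _ => (1:ℝ) with hfdef
  set I : ℝ := (μ A).toReal with hIdef
  have hI0 : 0 ≤ I := ENNReal.toReal_nonneg
  have hI1 : I ≤ 1 := by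
    rw [hIdef]
    calc (μ A).toReal ≤ (1 : ℝ≥0∞).toReal := ENNReal.toReal_mono (by simp) prob_le_one
      _ = 1 := by simp
  have hf : Measurable f := measurable_const.indicator hA
  have hf0 : ∀ x, 0 ≤ f x := fun x => Set.indicator_nonneg (fun _ _ => zero_le_one) x
  have hf1 : ∀ x, f x ≤ 1 := by
    intro x; by_cases hx : x ∈ A <;> simp [hfdef, hx]
  have hbirk := birkhoff_ae hT hA
  have hsm : ∀ n : ℕ, StronglyMeasurable (fun x => (n:ℝ)⁻¹ * birkhoffSum T f n x) := fun n =>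
    ((measurable_bS hT.toMeasurePreserving.measurable hf n).const_mul _).stronglyMeasurable
  set ε' : ℝ := min (δ/2) 2⁻¹ with hε'def
  have hε' : 0 < ε' := lt_min (by linarith) (by norm_num)
  obtain ⟨t, htm, htμ, hunif⟩ := tendstoUniformlyOn_of_ae_tendsto' hsm
    stronglyMeasurable_const hbirk hε'
  -- the measure bound
  have hμZ : μ tᶜ > ENNReal.ofReal (1 - δ) := by
    have h1 : μ tᶜ = 1 - μ t := by
      rw [measure_compl htm (measure_ne_top μ _), measure_univ]
    have h2 : ENNReal.ofReal (1 - δ) < 1 - ENNReal.ofReal ε' := by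
      have hε'1 : ε' ≤ 2⁻¹ := min_le_right _ _
      have hε'δ : ε' < δ := lt_of_le_of_lt (min_le_left _ _) (by linarith)
      have he : (1 : ℝ≥0∞) - ENNReal.ofReal ε' = ENNReal.ofReal (1 - ε') := by
        rw [← ENNReal.ofReal_one, ← ENNReal.ofReal_sub _ hε'.le]
      rw [he]
      rw [ENNReal.ofReal_lt_ofReal_iff (by norm_num; linarith)]
      linarith
    have h3 : (1:ℝ≥0∞) - ENNReal.ofReal ε' ≤ 1 - μ t := by
      exact tsub_le_tsub_left htμ 1
    rw [h1]
    exact lt_of_lt_of_le h2 h3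
  -- uniform convergence data
  have hκ2 : (0:ℝ) < 2/κ := div_pos two_pos hκ
  set η : ℝ := ε / (2 * (2 + 2/κ)) with hηdef
  have hη0 : 0 < η := div_pos hε (by linarith)
  have hη2 : η * (2 + 2/κ) = ε/2 := by
    rw [hηdef]
    field_simp
  obtain ⟨N₀, hN₀⟩ := eventually_atTop.1 ((Metric.tendstoUniformlyOn_iff.1 hunif) η hη0)
  set N : ℕ := N₀ + Nat.ceil ((4*(N₀:ℝ)+4)/ε) + 1 with hNdef
  refine ⟨N, tᶜ, htm.compl, hμZ, ?_⟩
  intro M L hNL hκL x hxZ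
  -- M ≥ 1
  have hM1 : 1 ≤ M := by
    rcases Nat.eq_zero_or_pos M with h | h
    · subst h
      simp only [Nat.cast_zero, div_zero] at hκL
      linarith
    · exact h
  have hL1 : 1 ≤ L := le_trans (by omega) hNL
  have hL0 : (0:ℝ) < L := by exact_mod_cast hL1
  have hM0 : (0:ℝ) < M := by exact_mod_cast hM1
  have hMκ : κ * M ≤ L := (le_div_iff₀ hM0).1 hκL
  -- the window sum identity
  set P : ℕ := M + L + 1 with hPdef
  have hsum_eq : ∑ n ∈ Finset.Icc M (M + L), f (T^[n] x)
      = birkhoffSum T f P x - birkhoffSum T f M x := by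
    rw [← Finset.Ico_add_one_right_eq_Icc]
    exact Finset.sum_Ico_eq_sub (fun n => f (T^[n] x)) (by omega)
  -- bounds on the two birkhoff sums
  have havP : |(P:ℝ)⁻¹ * birkhoffSum T f P x - I| < η := by
    have h := hN₀ P (by omega) x hxZ
    rw [dist_comm] at h
    rwa [Real.dist_eq] at h
  have hP0 : (0:ℝ) < P := by positivity
  have hSP : |birkhoffSum T f P x - P * I| ≤ P * η := by
    have h1 : birkhoffSum T f P x - (P:ℝ) * I = P * ((P:ℝ)⁻¹ * birkhoffSum T f P x - I) := by
      field_simp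
    rw [h1, abs_mul, abs_of_pos hP0]
    exact mul_le_mul_of_nonneg_left havP.le hP0.le
  have hSM : |birkhoffSum T f M x - M * I| ≤ M * η + 2*N₀ := by
    rcases le_or_gt N₀ M with h | h
    · have havM : |(M:ℝ)⁻¹ * birkhoffSum T f M x - I| < η := by
        have hh := hN₀ M h x hxZ
        rw [dist_comm] at hh
        rwa [Real.dist_eq] at hh
      have h1 : birkhoffSum T f M x - (M:ℝ) * I = M * ((M:ℝ)⁻¹ * birkhoffSum T f M x - I) := by
        field_simp
      rw [h1, abs_mul, abs_of_pos hM0]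
      have := mul_le_mul_of_nonneg_left havM.le hM0.le
      have hN0' : (0:ℝ) ≤ 2*N₀ := by positivity
      linarith
    · have h1 : 0 ≤ birkhoffSum T f M x := bS_nonneg hf0 M x
      have h2 : birkhoffSum T f M x ≤ M := bS_le hf1 M x
      have h3 : 0 ≤ (M:ℝ) * I := by positivity
      have h4 : (M:ℝ) * I ≤ M := by
        calc (M:ℝ) * I ≤ (M:ℝ) * 1 := mul_le_mul_of_nonneg_left hI1 hM0.le
          _ = M := mul_one _
      have h5 : (M:ℝ) ≤ N₀ := by
        have : (M:ℝ) < N₀ := by exact_mod_cast h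
        linarith
      have h6 : (0:ℝ) ≤ M * η := by positivity
      rw [abs_le]
      constructor <;> linarith
  -- key numeric bound
  have hNlow : (4*(N₀:ℝ)+4)/ε < L := by
    have h1 : (4*(N₀:ℝ)+4)/ε ≤ (Nat.ceil ((4*(N₀:ℝ)+4)/ε) : ℝ) := Nat.le_ceil _
    have h2 : (Nat.ceil ((4*(N₀:ℝ)+4)/ε) : ℝ) < N := by
      have : Nat.ceil ((4*(N₀:ℝ)+4)/ε) < N := by omega
      exact_mod_cast this
    have h3 : (N:ℝ) ≤ L := by exact_mod_cast hNL
    linarith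
  have hNbig : 4*(N₀:ℝ) + 4 < ε * L := by
    rw [div_lt_iff₀ hε] at hNlow
    linarith
  -- combine
  have hPcast : (P:ℝ) = M + L + 1 := by rw [hPdef]; push_cast; ring
  have hML : (M:ℝ) ≤ L / κ := by
    rw [le_div_iff₀ hκ]
    linarith
  have e1 : (M:ℝ) * η ≤ (L/κ) * η := mul_le_mul_of_nonneg_right hML hη0.le
  have e2 : η ≤ (L:ℝ) * η := le_mul_of_one_le_left hη0.le (by exact_mod_cast hL1)
  have e3 : (L:ℝ) * η * (2 + 2/κ) = L * (ε/2) := by rw [mul_assoc, hη2]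
  have e4 : (L/κ) * η = (L:ℝ) * η * (1/κ) := by ring
  have e5 : (L:ℝ) * η * (2 + 2/κ) = 2 * ((L:ℝ)*η) + 2 * ((L:ℝ)*η*(1/κ)) := by ring
  have hPη : (P:ℝ) * η = M*η + L*η + η := by rw [hPcast]; ring
  have hmain : (P:ℝ)*η + (M*η + 2*N₀) + I < ε * L := by
    have c1 : (P:ℝ)*η + M*η ≤ L*η + 2*((L:ℝ)*η*(1/κ)) + η := by
      rw [hPη]
      rw [e4] at e1
      linarith
    have c2 : (L:ℝ)*η + 2*((L:ℝ)*η*(1/κ)) + η ≤ L * (ε/2) := by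
      rw [← e3, e5]
      linarith
    have c3 : 2*(N₀:ℝ) + I ≤ 2*N₀ + 1 := by linarith
    have c4 : 2*(N₀:ℝ) + 1 < ε * L / 2 := by linarith
    have c5 : (L:ℝ) * (ε/2) = ε * L / 2 := by ring
    linarith
  -- finish
  have hW : |(birkhoffSum T f P x - birkhoffSum T f M x) - L * I| < ε * L := by
    have hid : (birkhoffSum T f P x - birkhoffSum T f M x) - (L:ℝ) * I
        = (birkhoffSum T f P x - P * I) - (birkhoffSum T f M x - M * I) + I := by
      rw [hPcast]; ring
    rw [hid]
    calc |(birkhoffSum T f P x - P * I) - (birkhoffSum T f M x - M * I) + I|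
        ≤ |birkhoffSum T f P x - P * I| + |birkhoffSum T f M x - M * I| + |I| := by
          have h1 := abs_add_le ((birkhoffSum T f P x - P * I) - (birkhoffSum T f M x - M * I)) I
          have h2 := abs_sub (birkhoffSum T f P x - P * I) (birkhoffSum T f M x - M * I)
          linarith
      _ < ε * L := by
          rw [abs_of_nonneg hI0]
          linarith
  rw [hsum_eq]
  have hfin : (1/(L:ℝ)) * (birkhoffSum T f P x - birkhoffSum T f M x) - I
      = ((birkhoffSum T f P x - birkhoffSum T f M x) - L * I) / L := by
    field_simp
  rw [hfin, abs_div, abs_of_pos hL0, div_lt_iff₀ hL0]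
  calc |(birkhoffSum T f P x - birkhoffSum T f M x) - L * I| < ε * L := hW
    _ = ε * L := rfl
end
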